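/- arXiv:math/0508591 — 3 statements merged into one kernel-verified Lean document; each statement's English description precedes it below -/
import Mathlib

section
/- Let A and B be arbitrary linear operators on an n-dimensional inner product space and let S(·) denote the vector of singular values in nonincreasing order. Then S(A+B) ≺_w S(A) + S(B), i.e. for each k, the sum of the k largest singular values of A+B is at most the sum of the k largest singular values of A plus the sum of the k largest singular values of B. -/
open Finset

/-- `s` is the listing, in nonincreasing order, of the singular values (with multiplicity)
of the matrix `A`, i.e. the square roots of the eigenvalues of `Aᴴ * A`. -/
def IsSingListDesc {n : ℕ} (A : Matrix (Fin n) (Fin n) ℂ) (s : Fin n → ℝ) : Prop :=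
  Antitone s ∧ ∃ σ : Equiv.Perm (Fin n),
    s = (fun i => Real.sqrt ((Matrix.isHermitian_conjTranspose_mul_self A).eigenvalues i)) ∘ σ

/-- Weak majorization `x ≺_w y`, with `y` in nonincreasing order. -/
def WeakMajDesc {m n : ℕ} (x : Fin m → ℝ) (y : Fin n → ℝ) : Prop :=
  ∀ t : Finset (Fin m),
    ∑ i ∈ t, x i ≤ ∑ i ∈ univ.filter (fun j : Fin n => (j : ℕ) < t.card), y i

namespace SingAux

open Matrix

noncomputable def toE {n : ℕ} (v : Fin n → ℂ) : EuclideanSpace ℂ (Fin n) :=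
  (WithLp.equiv 2 _).symm v

variable {n : ℕ}

@[simp] lemma toE_coe (v : Fin n → ℂ) : ⇑(toE v) = v := rfl
@[simp] lemma toE_coe' (v : EuclideanSpace ℂ (Fin n)) : toE ⇑v = v := rfl
lemma toE_add (x y : Fin n → ℂ) : toE (x + y) = toE x + toE y := rfl

lemma inner_eq_dot (x y : EuclideanSpace ℂ (Fin n)) :
    (inner ℂ x y : ℂ) = dotProduct (star (⇑x : Fin n → ℂ)) ⇑y := by
  rw [EuclideanSpace.inner_eq_star_dotProduct, dotProduct_comm]

lemma inner_mulVec_mulVec (M : Matrix (Fin n) (Fin n) ℂ) (a b : EuclideanSpace ℂ (Fin n)) :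
    (inner ℂ (toE (M *ᵥ ⇑a)) (toE (M *ᵥ ⇑b)) : ℂ) = inner ℂ a (toE ((Mᴴ * M) *ᵥ ⇑b)) := by
  rw [inner_eq_dot, inner_eq_dot]
  simp only [toE_coe]
  rw [Matrix.star_mulVec, Matrix.dotProduct_mulVec, Matrix.vecMul_vecMul,
    ← Matrix.dotProduct_mulVec]

lemma key_inner (M : Matrix (Fin n) (Fin n) ℂ) (i j : Fin n) :
    (inner ℂ (toE (M *ᵥ ⇑((Matrix.isHermitian_conjTranspose_mul_self M).eigenvectorBasis i)))
           (toE (M *ᵥ ⇑((Matrix.isHermitian_conjTranspose_mul_self M).eigenvectorBasis j))) : ℂ)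
      = if i = j then (((Matrix.isHermitian_conjTranspose_mul_self M).eigenvalues j : ℝ) : ℂ)
        else 0 := by
  set hN := Matrix.isHermitian_conjTranspose_mul_self M
  rw [inner_mulVec_mulVec]
  have h : toE ((Mᴴ * M) *ᵥ ⇑(hN.eigenvectorBasis j))
      = ((hN.eigenvalues j : ℝ) : ℂ) • hN.eigenvectorBasis j := by
    have h2 := hN.mulVec_eigenvectorBasis j
    have h3 : (Mᴴ * M) *ᵥ ⇑(hN.eigenvectorBasis j)
        = ⇑((hN.eigenvalues j : ℝ) • hN.eigenvectorBasis j) := by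
      rw [h2]; rfl
    rw [h3, toE_coe']
    exact (RCLike.real_smul_eq_coe_smul (K := ℂ) _ _)
  rw [h, inner_smul_right]
  rw [orthonormal_iff_ite.mp hN.eigenvectorBasis.orthonormal i j]
  by_cases hij : i = j <;> simp [hij]

noncomputable def mulVecE (M : Matrix (Fin n) (Fin n) ℂ) :
    EuclideanSpace ℂ (Fin n) →ₗ[ℂ] EuclideanSpace ℂ (Fin n) where
  toFun a := toE (M *ᵥ ⇑a)
  map_add' a b := by
    ext i
    simp only [toE_coe]
    show (M *ᵥ (⇑a + ⇑b)) i = (M *ᵥ ⇑a) i + (M *ᵥ ⇑b) i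
    rw [Matrix.mulVec_add]; rfl
  map_smul' c a := by
    ext i
    simp only [toE_coe, RingHom.id_apply]
    show (M *ᵥ (c • ⇑a)) i = (c • (toE (M *ᵥ ⇑a))) i
    rw [Matrix.mulVec_smul]; rfl

lemma mulVecE_apply (M : Matrix (Fin n) (Fin n) ℂ) (a : EuclideanSpace ℂ (Fin n)) :
    mulVecE M a = toE (M *ᵥ ⇑a) := rfl

lemma cauchy_sum {ι : Type*} (t : Finset ι) (f g : ι → ℝ) (hf : ∀ i, 0 ≤ f i)
    (hg : ∀ i, 0 ≤ g i) :
    ∑ i ∈ t, f i * g i ≤ Real.sqrt (∑ i ∈ t, f i ^ 2) * Real.sqrt (∑ i ∈ t, g i ^ 2) := by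
  have h := Finset.sum_mul_sq_le_sq_mul_sq t f g
  have h0 : 0 ≤ ∑ i ∈ t, f i * g i := Finset.sum_nonneg fun i _ => mul_nonneg (hf i) (hg i)
  have := Real.sqrt_le_sqrt h
  rwa [Real.sqrt_sq h0, Real.sqrt_mul (Finset.sum_nonneg fun i _ => sq_nonneg _)] at this

lemma parseval (b : OrthonormalBasis (Fin n) ℂ (EuclideanSpace ℂ (Fin n)))
    (v : EuclideanSpace ℂ (Fin n)) :
    ∑ j, ‖(inner ℂ (b j) v : ℂ)‖ ^ 2 = ‖v‖ ^ 2 := by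
  have h1 : ∀ j, ‖(inner ℂ (b j) v : ℂ)‖ ^ 2 = ‖b.repr v j‖ ^ 2 := by
    intro j; rw [b.repr_apply_apply]
  simp_rw [h1]
  rw [← Real.sq_sqrt (Finset.sum_nonneg fun (i : Fin n) _ => sq_nonneg ‖b.repr v i‖),
    ← EuclideanSpace.norm_eq, b.repr.norm_map]

lemma card_filter_lt_le (n k : ℕ) :
    (Finset.univ.filter (fun j : Fin n => (j : ℕ) < k)).card ≤ k := by
  have h := Finset.card_le_card_of_injOn
    (s := Finset.univ.filter (fun j : Fin n => (j : ℕ) < k)) (t := Finset.range k)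
    (fun j : Fin n => (j : ℕ))
    (fun a ha => Finset.mem_range.mpr (Finset.mem_filter.mp ha).2)
    (fun a _ b _ h => Fin.ext h)
  rwa [Finset.card_range] at h

lemma card_filter_lt (n k : ℕ) (h : k ≤ n) :
    (Finset.univ.filter (fun j : Fin n => (j : ℕ) < k)).card = k := by
  rw [← Finset.card_range k]
  apply Finset.card_bij (fun (j : Fin n) _ => (j : ℕ))
  · intro a ha; simp only [mem_filter] at ha; simpa using ha.2
  · intro a _ b _ hab; exact Fin.ext hab
  · intro b hb
    simp only [Finset.mem_range] at hb
    exact ⟨⟨b, lt_of_lt_of_le hb h⟩, by simp [hb], rfl⟩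

lemma final_comb {n k : ℕ} (s τ : Fin n → ℝ) (hs : Antitone s) (hs0 : ∀ j, 0 ≤ s j)
    (hτ0 : ∀ j, 0 ≤ τ j) (hτ1 : ∀ j, τ j ≤ 1) (hτk : ∑ j, τ j ≤ (k : ℝ)) :
    ∑ j, s j * τ j ≤ ∑ j ∈ univ.filter (fun j : Fin n => (j : ℕ) < k), s j := by
  by_cases hkn : k < n
  · set a := s ⟨k, hkn⟩ with ha
    have ha0 : 0 ≤ a := hs0 _
    have step : ∑ j, s j * τ j
        ≤ ∑ j : Fin n, (if (j : ℕ) < k then s j + a * (τ j - 1) else a * τ j) := by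
      apply Finset.sum_le_sum
      intro j _
      by_cases hj : (j : ℕ) < k
      · simp only [hj, if_true]
        have hsj : a ≤ s j := hs (show j ≤ ⟨k, hkn⟩ from le_of_lt hj)
        nlinarith [hτ1 j]
      · simp only [hj, if_false]
        have hsj : s j ≤ a := hs (show (⟨k, hkn⟩ : Fin n) ≤ j from not_lt.mp hj)
        nlinarith [hτ0 j]
    refine step.trans ?_
    rw [Finset.sum_ite]
    have hcard : (univ.filter (fun j : Fin n => (j : ℕ) < k)).card = k :=
      card_filter_lt n k (le_of_lt hkn)
    have e1 : ∑ j ∈ univ.filter (fun j : Fin n => (j : ℕ) < k), (s j + a * (τ j - 1))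
        = ∑ j ∈ univ.filter (fun j : Fin n => (j : ℕ) < k), s j
          + (∑ j ∈ univ.filter (fun j : Fin n => (j : ℕ) < k), a * τ j) - a * k := by
      rw [Finset.sum_add_distrib]
      simp only [mul_sub, mul_one, Finset.sum_sub_distrib, Finset.sum_const, hcard,
        nsmul_eq_mul]
      ring
    rw [e1]
    have e2 : ∑ j ∈ univ.filter (fun j : Fin n => (j : ℕ) < k), a * τ j
        + ∑ j ∈ univ.filter (fun j : Fin n => ¬ (j : ℕ) < k), a * τ j = a * ∑ j, τ j := by
      rw [Finset.sum_filter_add_sum_filter_not, Finset.mul_sum]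
    have : a * ∑ j, τ j ≤ a * k := mul_le_mul_of_nonneg_left hτk ha0
    linarith [e2, this]
  · have hall : univ.filter (fun j : Fin n => (j : ℕ) < k) = (univ : Finset (Fin n)) := by
      apply Finset.filter_true_of_mem
      intro j _; exact lt_of_lt_of_le j.isLt (not_lt.mp hkn)
    rw [hall]
    apply Finset.sum_le_sum
    intro j _
    calc s j * τ j ≤ s j * 1 := mul_le_mul_of_nonneg_left (hτ1 j) (hs0 j)
    _ = s j := mul_one _

lemma strictMono_le_val {k n : ℕ} (f : Fin k → Fin n) (hf : StrictMono f) (i : Fin k) :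
    (i : ℕ) ≤ (f i : ℕ) := by
  have key : ∀ m : ℕ, ∀ i : Fin k, (i : ℕ) = m → m ≤ (f i : ℕ) := by
    intro m
    induction m with
    | zero => intro i _; exact Nat.zero_le _
    | succ m ih =>
      intro i hi
      have hm : m < k := by omega
      have h1 : (⟨m, hm⟩ : Fin k) < i := by simp [Fin.lt_def]; omega
      have h2 := hf h1
      have h3 := ih ⟨m, hm⟩ rfl
      simp only [Fin.lt_def] at h2
      omega
  exact key (i : ℕ) i rfl

lemma antitone_sum_le {n : ℕ} (s : Fin n → ℝ) (hs : Antitone s)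
    (t : Finset (Fin n)) :
    ∑ i ∈ t, s i ≤ ∑ j ∈ univ.filter (fun j : Fin n => (j : ℕ) < t.card), s j := by
  classical
  set k := t.card with hk
  have hkn : k ≤ n := by rw [hk]; simpa using Finset.card_le_card (Finset.subset_univ t)
  let o := t.orderIsoOfFin hk.symm
  have h1 : ∑ i ∈ t, s i = ∑ i : Fin k, s (o i) := by
    rw [← Finset.sum_coe_sort t s]
    exact (Fintype.sum_equiv o.toEquiv (fun i => s ((o i : Fin n)))
      (fun x => s ((x : Fin n))) (fun i => rfl)).symm
  rw [h1]
  have h2 : ∀ i : Fin k, s ((o i : Fin n)) ≤ s ⟨(i : ℕ), lt_of_lt_of_le i.isLt hkn⟩ := by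
    intro i
    apply hs
    have := strictMono_le_val (fun i => (o i : Fin n))
      (fun a b hab => by exact_mod_cast (t.orderIsoOfFin hk.symm).strictMono hab) i
    exact this
  calc ∑ i : Fin k, s (o i) ≤ ∑ i : Fin k, s ⟨(i : ℕ), lt_of_lt_of_le i.isLt hkn⟩ :=
        Finset.sum_le_sum (fun i _ => h2 i)
  _ = ∑ j ∈ univ.filter (fun j : Fin n => (j : ℕ) < k), s j := by
      exact Finset.sum_bij'
        (fun (i : Fin k) (_ : i ∈ univ) => (⟨(i : ℕ), lt_of_lt_of_le i.isLt hkn⟩ : Fin n))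
        (fun (j : Fin n) (hj : j ∈ univ.filter (fun j : Fin n => (j : ℕ) < k)) =>
          (⟨(j : ℕ), (Finset.mem_filter.mp hj).2⟩ : Fin k))
        (fun a ha => by simp) (fun a ha => by simp) (fun a ha => rfl) (fun a ha => rfl)
        (fun a ha => rfl)


lemma kyfan_ub {n k : ℕ} (M : Matrix (Fin n) (Fin n) ℂ) (s : Fin n → ℝ)
    (hs : IsSingListDesc M s) (t : Finset (Fin n)) (ht : t.card ≤ k)
    (u v : Fin n → EuclideanSpace ℂ (Fin n))
    (hu : Orthonormal ℂ (fun i : t => u i)) (hv : Orthonormal ℂ (fun i : t => v i)) :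
    (∑ i ∈ t, (inner ℂ (u i) (mulVecE M (v i)) : ℂ)).re
      ≤ ∑ j ∈ univ.filter (fun j : Fin n => (j : ℕ) < k), s j := by
  classical
  obtain ⟨hanti, σ, hσ⟩ := hs
  set hN := Matrix.isHermitian_conjTranspose_mul_self M with hNdef
  set μ : Fin n → ℝ := hN.eigenvalues with hμdef
  set xb := hN.eigenvectorBasis with hxdef
  have hμ0 : ∀ j, 0 ≤ μ j := fun j =>
    Matrix.eigenvalues_conjTranspose_mul_self_nonneg M j
  have hsval : ∀ j, s j = Real.sqrt (μ (σ j)) := fun j => congrFun hσ j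
  have hs0 : ∀ j, 0 ≤ s j := fun j => (hsval j) ▸ Real.sqrt_nonneg _
  set w : Fin n → EuclideanSpace ℂ (Fin n) :=
    fun j => if μ j = 0 then 0 else ((Real.sqrt (μ j) : ℝ) : ℂ)⁻¹ • toE (M *ᵥ ⇑(xb j))
    with hwdef
  have key : ∀ i j, (inner ℂ (toE (M *ᵥ ⇑(xb i))) (toE (M *ᵥ ⇑(xb j))) : ℂ)
      = if i = j then ((μ j : ℝ) : ℂ) else 0 := key_inner M
  have hsqrt_ne : ∀ j, μ j ≠ 0 → ((Real.sqrt (μ j) : ℝ) : ℂ) ≠ 0 := by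
    intro j h0
    simp only [ne_eq, Complex.ofReal_eq_zero]
    exact Real.sqrt_ne_zero'.mpr (lt_of_le_of_ne (hμ0 j) (Ne.symm h0))
  have hMx : ∀ j, toE (M *ᵥ ⇑(xb j)) = ((Real.sqrt (μ j) : ℝ) : ℂ) • w j := by
    intro j
    by_cases h0 : μ j = 0
    · have h1 := key j j
      rw [if_pos rfl, h0] at h1
      have hz : toE (M *ᵥ ⇑(xb j)) = 0 := inner_self_eq_zero.mp (by rw [h1]; simp)
      rw [hz, hwdef]; simp [h0]
    · rw [hwdef]; simp only [h0, if_false]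
      rw [smul_smul, mul_inv_cancel₀ (hsqrt_ne j h0), one_smul]
  have hworth : ∀ i j, μ i ≠ 0 → μ j ≠ 0 →
      (inner ℂ (w i) (w j) : ℂ) = if i = j then 1 else 0 := by
    intro i j hi hj
    rw [hwdef]
    simp only [hi, hj, if_false]
    rw [inner_smul_left, inner_smul_right, key i j]
    by_cases hij : i = j
    · subst hij
      simp only [if_pos rfl]
      rw [map_inv₀, Complex.conj_ofReal]
      have : ((Real.sqrt (μ i) : ℝ) : ℂ) * ((Real.sqrt (μ i) : ℝ) : ℂ) = ((μ i : ℝ) : ℂ) := by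
        rw [← Complex.ofReal_mul, Real.mul_self_sqrt (hμ0 i)]
      field_simp
      rw [if_pos trivial, if_pos trivial, ← this, sq, div_self (mul_ne_zero (hsqrt_ne i hi) (hsqrt_ne i hi))]
    · simp [hij]
  have hwnorm : ∀ j, ‖w j‖ ≤ 1 := by
    intro j
    by_cases h0 : μ j = 0
    · rw [hwdef]; simp [h0]
    · have h1 := hworth j j h0 h0
      rw [if_pos rfl] at h1
      have h2 := inner_self_eq_norm_sq_to_K (𝕜 := ℂ) (w j)
      rw [h1] at h2
      have h4 : ((‖w j‖ ^ 2 : ℝ) : ℂ) = 1 := by rw [Complex.ofReal_pow]; exact h2.symm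
      have h3 : ‖w j‖ ^ 2 = 1 := by exact_mod_cast h4
      nlinarith [norm_nonneg (w j)]
  -- expansion
  have expand : ∀ i : Fin n, mulVecE M (v i)
      = ∑ j, (inner ℂ (xb j) (v i) : ℂ) • (((Real.sqrt (μ j) : ℝ) : ℂ) • w j) := by
    intro i
    conv_lhs => rw [← xb.sum_repr' (v i)]
    rw [map_sum]
    apply Finset.sum_congr rfl
    intro j _
    rw [LinearMap.map_smul, mulVecE_apply, hMx j]
  set P : Fin n → Fin n → ℂ := fun i j => inner ℂ (xb (σ j)) (v i) with hP
  set Q : Fin n → Fin n → ℂ := fun i j => inner ℂ (u i) (w (σ j)) with hQ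
  have term : ∀ i : Fin n, (inner ℂ (u i) (mulVecE M (v i)) : ℂ)
      = ∑ j, (s j : ℂ) * (P i j * Q i j) := by
    intro i
    rw [expand i, inner_sum]
    rw [← Equiv.sum_comp σ (fun j => (inner ℂ (u i)
      ((inner ℂ (xb j) (v i) : ℂ) • (((Real.sqrt (μ j) : ℝ) : ℂ) • w j)) : ℂ))]
    apply Finset.sum_congr rfl
    intro j _
    rw [inner_smul_right, inner_smul_right, hsval j]
    ring_nf
    simp only [hP, hQ]; ring
  have Tsum : (∑ i ∈ t, (inner ℂ (u i) (mulVecE M (v i)) : ℂ))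
      = ∑ j, (s j : ℂ) * (∑ i ∈ t, P i j * Q i j) := by
    rw [Finset.sum_congr rfl (fun i _ => term i), Finset.sum_comm]
    apply Finset.sum_congr rfl
    intro j _
    rw [Finset.mul_sum]
  set R : Fin n → ℝ := fun j => (∑ i ∈ t, P i j * Q i j).re with hR
  have Tre : (∑ i ∈ t, (inner ℂ (u i) (mulVecE M (v i)) : ℂ)).re = ∑ j, s j * R j := by
    rw [Tsum, Complex.re_sum]
    apply Finset.sum_congr rfl
    intro j _
    simp [hR, Complex.mul_re, Complex.ofReal_re, Complex.ofReal_im]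
  set c : Fin n → ℝ := fun j => Real.sqrt (∑ i ∈ t, ‖P i j‖ ^ 2) with hc
  set d : Fin n → ℝ := fun j => Real.sqrt (∑ i ∈ t, ‖Q i j‖ ^ 2) with hd
  have hc0 : ∀ j, 0 ≤ c j := fun j => Real.sqrt_nonneg _
  have hd0 : ∀ j, 0 ≤ d j := fun j => Real.sqrt_nonneg _
  have hRcd : ∀ j, R j ≤ c j * d j := by
    intro j
    calc R j ≤ ‖∑ i ∈ t, P i j * Q i j‖ := Complex.re_le_norm _
    _ ≤ ∑ i ∈ t, ‖P i j * Q i j‖ := norm_sum_le _ _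
    _ = ∑ i ∈ t, ‖P i j‖ * ‖Q i j‖ := by simp [norm_mul]
    _ ≤ c j * d j := cauchy_sum t _ _ (fun i => norm_nonneg _) (fun i => norm_nonneg _)
  -- Bessel bounds
  have hPsum : ∀ j, ∑ i ∈ t, ‖P i j‖ ^ 2 ≤ 1 := by
    intro j
    have hb := hv.sum_inner_products_le (x := xb (σ j)) (s := (univ : Finset t))
    rw [← Finset.sum_coe_sort t (fun i => ‖P i j‖ ^ 2)]
    have : ∀ i : t, ‖P (i : Fin n) j‖ ^ 2 = ‖(inner ℂ (v (i : Fin n)) (xb (σ j)) : ℂ)‖ ^ 2 := by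
      intro i; rw [hP]; simp only []; rw [norm_inner_symm]
    rw [Finset.sum_congr rfl (fun i _ => this i)]
    calc (∑ i : t, ‖(inner ℂ (v (i : Fin n)) (xb (σ j)) : ℂ)‖ ^ 2) ≤ ‖xb (σ j)‖ ^ 2 := hb
    _ = 1 := by rw [xb.orthonormal.1 (σ j)]; norm_num
  have hQsum : ∀ j, ∑ i ∈ t, ‖Q i j‖ ^ 2 ≤ 1 := by
    intro j
    have hb := hu.sum_inner_products_le (x := w (σ j)) (s := (univ : Finset t))
    rw [← Finset.sum_coe_sort t (fun i => ‖Q i j‖ ^ 2)]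
    calc (∑ i : t, ‖Q (i : Fin n) j‖ ^ 2) = ∑ i : t, ‖(inner ℂ (u (i : Fin n)) (w (σ j)) : ℂ)‖ ^ 2 := rfl
    _ ≤ ‖w (σ j)‖ ^ 2 := hb
    _ ≤ 1 := by nlinarith [hwnorm (σ j), norm_nonneg (w (σ j))]
  have hc1 : ∀ j, c j ≤ 1 := by
    intro j
    rw [hc]
    calc Real.sqrt (∑ i ∈ t, ‖P i j‖ ^ 2) ≤ Real.sqrt 1 := Real.sqrt_le_sqrt (hPsum j)
    _ = 1 := Real.sqrt_one
  have hd1 : ∀ j, d j ≤ 1 := by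
    intro j
    rw [hd]
    calc Real.sqrt (∑ i ∈ t, ‖Q i j‖ ^ 2) ≤ Real.sqrt 1 := Real.sqrt_le_sqrt (hQsum j)
    _ = 1 := Real.sqrt_one
  have hcsq : ∀ j, c j ^ 2 = ∑ i ∈ t, ‖P i j‖ ^ 2 :=
    fun j => Real.sq_sqrt (Finset.sum_nonneg fun i _ => sq_nonneg _)
  have hdsq : ∀ j, d j ^ 2 = ∑ i ∈ t, ‖Q i j‖ ^ 2 :=
    fun j => Real.sq_sqrt (Finset.sum_nonneg fun i _ => sq_nonneg _)
  have hcsum : ∑ j, c j ^ 2 ≤ (k : ℝ) := by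
    calc ∑ j, c j ^ 2 = ∑ j, ∑ i ∈ t, ‖P i j‖ ^ 2 := by
          exact Finset.sum_congr rfl (fun j _ => hcsq j)
    _ = ∑ i ∈ t, ∑ j, ‖P i j‖ ^ 2 := Finset.sum_comm
    _ = ∑ i ∈ t, (1 : ℝ) := by
          apply Finset.sum_congr rfl
          intro i hi
          have e1 : ∑ j, ‖P i j‖ ^ 2 = ∑ j, ‖(inner ℂ (xb j) (v i) : ℂ)‖ ^ 2 := by
            rw [← Equiv.sum_comp σ (fun j => ‖(inner ℂ (xb j) (v i) : ℂ)‖ ^ 2)]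
          rw [e1, parseval xb (v i)]
          have := hv.1 ⟨i, hi⟩
          rw [this]; norm_num
    _ = t.card := by simp
    _ ≤ (k : ℝ) := by exact_mod_cast ht
  have hdsum : ∑ j, d j ^ 2 ≤ (k : ℝ) := by
    calc ∑ j, d j ^ 2 = ∑ j, ∑ i ∈ t, ‖Q i j‖ ^ 2 := by
          exact Finset.sum_congr rfl (fun j _ => hdsq j)
    _ = ∑ i ∈ t, ∑ j, ‖Q i j‖ ^ 2 := Finset.sum_comm
    _ ≤ ∑ i ∈ t, (1 : ℝ) := by
          apply Finset.sum_le_sum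
          intro i hi
          have e1 : ∑ j, ‖Q i j‖ ^ 2 = ∑ j, ‖(inner ℂ (u i) (w j) : ℂ)‖ ^ 2 := by
            rw [← Equiv.sum_comp σ (fun j => ‖(inner ℂ (u i) (w j) : ℂ)‖ ^ 2)]
          rw [e1]
          -- Bessel for the w family on nonzero eigenvalues
          set t0 : Finset (Fin n) := univ.filter (fun j => μ j ≠ 0) with ht0
          have hw_on : Orthonormal ℂ (fun j : t0 => w j) := by
            rw [orthonormal_iff_ite]
            intro a b
            have ha := (Finset.mem_filter.mp a.2).2
            have hb := (Finset.mem_filter.mp b.2).2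
            rw [hworth a b ha hb]
            by_cases hab : (a : Fin n) = (b : Fin n)
            · rw [if_pos hab, if_pos (Subtype.ext hab)]
            · rw [if_neg hab, if_neg (fun h => hab (congrArg _ h))]
          have hbw := hw_on.sum_inner_products_le (x := u i) (s := (univ : Finset t0))
          have split : ∑ j, ‖(inner ℂ (u i) (w j) : ℂ)‖ ^ 2
              = ∑ j ∈ t0, ‖(inner ℂ (u i) (w j) : ℂ)‖ ^ 2 := by
            rw [ht0]
            refine (Finset.sum_filter_of_ne ?_).symm
            intro j _ hne h0
            apply hne
            rw [hwdef]
            simp [h0]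
          rw [split, ← Finset.sum_coe_sort t0 (fun j => ‖(inner ℂ (u i) (w j) : ℂ)‖ ^ 2)]
          have flip : ∀ j : t0, ‖(inner ℂ (u i) (w (j : Fin n)) : ℂ)‖ ^ 2
              = ‖(inner ℂ (w (j : Fin n)) (u i) : ℂ)‖ ^ 2 := by
            intro j; rw [norm_inner_symm]
          rw [Finset.sum_congr rfl (fun j _ => flip j)]
          calc (∑ j : t0, ‖(inner ℂ (w (j : Fin n)) (u i) : ℂ)‖ ^ 2) ≤ ‖u i‖ ^ 2 := hbw
          _ = 1 := by rw [hu.1 ⟨i, hi⟩]; norm_num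
    _ = t.card := by simp
    _ ≤ (k : ℝ) := by exact_mod_cast ht
  -- combine
  set τ : Fin n → ℝ := fun j => c j * d j with hτ
  have hτ0 : ∀ j, 0 ≤ τ j := fun j => mul_nonneg (hc0 j) (hd0 j)
  have hτ1 : ∀ j, τ j ≤ 1 := fun j => by
    calc τ j = c j * d j := rfl
    _ ≤ 1 * 1 := mul_le_mul (hc1 j) (hd1 j) (hd0 j) zero_le_one
    _ = 1 := by norm_num
  have hτk : ∑ j, τ j ≤ (k : ℝ) := by
    have h1 : ∀ j, τ j ≤ (c j ^ 2 + d j ^ 2) / 2 := by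
      intro j
      have := sq_nonneg (c j - d j)
      rw [hτ]
      nlinarith
    calc ∑ j, τ j ≤ ∑ j, (c j ^ 2 + d j ^ 2) / 2 := Finset.sum_le_sum (fun j _ => h1 j)
    _ = ((∑ j, c j ^ 2) + (∑ j, d j ^ 2)) / 2 := by
        rw [← Finset.sum_add_distrib, ← Finset.sum_div]
    _ ≤ ((k : ℝ) + (k : ℝ)) / 2 := by linarith
    _ = (k : ℝ) := by ring
  rw [Tre]
  calc ∑ j, s j * R j ≤ ∑ j, s j * τ j := by
        apply Finset.sum_le_sum
        intro j _
        exact mul_le_mul_of_nonneg_left ((hRcd j).trans_eq rfl) (hs0 j)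
  _ ≤ ∑ j ∈ univ.filter (fun j : Fin n => (j : ℕ) < k), s j :=
        final_comb s τ hanti hs0 hτ0 hτ1 hτk


lemma kyfan_lb {n : ℕ} (M : Matrix (Fin n) (Fin n) ℂ) (s : Fin n → ℝ)
    (hs : IsSingListDesc M s) (k : ℕ) :
    ∃ t : Finset (Fin n), t.card ≤ k ∧ ∃ u v : Fin n → EuclideanSpace ℂ (Fin n),
      Orthonormal ℂ (fun i : t => u i) ∧ Orthonormal ℂ (fun i : t => v i) ∧
      ∑ j ∈ univ.filter (fun j : Fin n => (j : ℕ) < k), s j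
        = (∑ i ∈ t, (inner ℂ (u i) (mulVecE M (v i)) : ℂ)).re := by
  classical
  obtain ⟨hanti, σ, hσ⟩ := hs
  set hN := Matrix.isHermitian_conjTranspose_mul_self M with hNdef
  set μ : Fin n → ℝ := hN.eigenvalues with hμdef
  set xb := hN.eigenvectorBasis with hxdef
  have hμ0 : ∀ j, 0 ≤ μ j := fun j => Matrix.eigenvalues_conjTranspose_mul_self_nonneg M j
  have hsval : ∀ j, s j = Real.sqrt (μ (σ j)) := fun j => congrFun hσ j
  have hs0 : ∀ j, 0 ≤ s j := fun j => (hsval j) ▸ Real.sqrt_nonneg _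
  have hssq : ∀ j, s j ^ 2 = μ (σ j) := by
    intro j; rw [hsval j, Real.sq_sqrt (hμ0 (σ j))]
  have key : ∀ i j, (inner ℂ (toE (M *ᵥ ⇑(xb i))) (toE (M *ᵥ ⇑(xb j))) : ℂ)
      = if i = j then ((μ j : ℝ) : ℂ) else 0 := key_inner M
  set t : Finset (Fin n) := univ.filter (fun i => (i : ℕ) < k ∧ s i ≠ 0) with htdef
  set u : Fin n → EuclideanSpace ℂ (Fin n) :=
    fun i => ((s i : ℝ) : ℂ)⁻¹ • toE (M *ᵥ ⇑(xb (σ i))) with hudef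
  set v : Fin n → EuclideanSpace ℂ (Fin n) := fun i => xb (σ i) with hvdef
  have hmem : ∀ i, i ∈ t → s i ≠ 0 := fun i hi => (Finset.mem_filter.mp hi).2.2
  have hinner_uu : ∀ a b : Fin n, s a ≠ 0 → s b ≠ 0 →
      (inner ℂ (u a) (u b) : ℂ) = if a = b then 1 else 0 := by
    intro a b ha hb
    rw [hudef]
    simp only []
    rw [inner_smul_left, inner_smul_right, key (σ a) (σ b)]
    by_cases hab : a = b
    · subst hab
      rw [if_pos rfl, if_pos rfl, map_inv₀, Complex.conj_ofReal]
      have h1 : ((s a : ℝ) : ℂ) * ((s a : ℝ) : ℂ) = ((μ (σ a) : ℝ) : ℂ) := by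
        rw [← Complex.ofReal_mul, ← sq, hssq a]
      have h2 : ((s a : ℝ) : ℂ) ≠ 0 := Complex.ofReal_ne_zero.mpr ha
      field_simp
      rw [← h1, sq]
    · rw [if_neg hab, if_neg (fun h => hab (σ.injective h))]
      ring
  refine ⟨t, ?_, u, v, ?_, ?_, ?_⟩
  · have hsub : t ⊆ univ.filter (fun j : Fin n => (j : ℕ) < k) := by
      intro a ha
      simp only [htdef, Finset.mem_filter] at ha ⊢
      exact ⟨ha.1, ha.2.1⟩
    exact le_trans (Finset.card_le_card hsub) (card_filter_lt_le n k)
  · rw [orthonormal_iff_ite]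
    intro a b
    rw [hinner_uu a b (hmem a a.2) (hmem b b.2)]
    by_cases hab : (a : Fin n) = (b : Fin n)
    · rw [if_pos hab, if_pos (Subtype.ext hab)]
    · rw [if_neg hab, if_neg (fun h => hab (congrArg _ h))]
  · rw [orthonormal_iff_ite]
    intro a b
    rw [hvdef]
    simp only []
    rw [orthonormal_iff_ite.mp xb.orthonormal (σ a) (σ b)]
    by_cases hab : (a : Fin n) = (b : Fin n)
    · rw [if_pos (congrArg σ hab), if_pos (Subtype.ext hab)]
    · rw [if_neg (fun h => hab (σ.injective h)), if_neg (fun h => hab (congrArg _ h))]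
  · have hterm : ∀ i ∈ t, (inner ℂ (u i) (mulVecE M (v i)) : ℂ) = ((s i : ℝ) : ℂ) := by
      intro i hi
      have hsi := hmem i hi
      have hmv : mulVecE M (v i) = toE (M *ᵥ ⇑(xb (σ i))) := rfl
      rw [hmv, hudef]
      simp only []
      rw [inner_smul_left, key (σ i) (σ i), if_pos rfl, map_inv₀, Complex.conj_ofReal]
      rw [← hssq i, sq]
      rw [Complex.ofReal_mul]
      have h2 : ((s i : ℝ) : ℂ) ≠ 0 := Complex.ofReal_ne_zero.mpr hsi
      field_simp
    rw [Finset.sum_congr rfl hterm]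
    have : (∑ i ∈ t, ((s i : ℝ) : ℂ)).re = ∑ i ∈ t, s i := by
      rw [Complex.re_sum]
      exact Finset.sum_congr rfl (fun i _ => Complex.ofReal_re _)
    rw [this, htdef]
    have hff : (univ.filter (fun i : Fin n => (i : ℕ) < k ∧ s i ≠ 0))
        = (univ.filter (fun j : Fin n => (j : ℕ) < k)).filter (fun i => s i ≠ 0) := by
      rw [Finset.filter_filter]
    rw [hff]
    exact (Finset.sum_filter_ne_zero _).symm

end SingAux

/-- `S(A+B) ≺_w S(A) + S(B)`: for each `k`, the sum of the `k` largest singular values of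
`A+B` is at most the sum of the `k` largest singular values of `A` plus that of `B`. -/
theorem sing_add_weakMaj {n : ℕ} (A B : Matrix (Fin n) (Fin n) ℂ)
    (sA sB sAB : Fin n → ℝ)
    (hsA : IsSingListDesc A sA) (hsB : IsSingListDesc B sB)
    (hsAB : IsSingListDesc (A + B) sAB) :
    WeakMajDesc sAB (sA + sB) := by
  intro t
  set k := t.card with hk
  have h1 : ∑ i ∈ t, sAB i ≤ ∑ j ∈ univ.filter (fun j : Fin n => (j : ℕ) < k), sAB j :=
    SingAux.antitone_sum_le sAB hsAB.1 t
  obtain ⟨t0, ht0, u, v, hu, hv, heq⟩ := SingAux.kyfan_lb (A + B) sAB hsAB k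
  have hadd : ∀ i, SingAux.mulVecE (A + B) (v i)
      = SingAux.mulVecE A (v i) + SingAux.mulVecE B (v i) := by
    intro i
    show SingAux.toE (Matrix.mulVec (A + B) ⇑(v i)) = _
    rw [Matrix.add_mulVec, SingAux.toE_add]
    rfl
  have hsplit : (∑ i ∈ t0, (inner ℂ (u i) (SingAux.mulVecE (A + B) (v i)) : ℂ)).re
      = (∑ i ∈ t0, (inner ℂ (u i) (SingAux.mulVecE A (v i)) : ℂ)).re
        + (∑ i ∈ t0, (inner ℂ (u i) (SingAux.mulVecE B (v i)) : ℂ)).re := by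
    have e1 : ∀ i, (inner ℂ (u i) (SingAux.mulVecE (A + B) (v i)) : ℂ)
        = (inner ℂ (u i) (SingAux.mulVecE A (v i)) : ℂ)
          + (inner ℂ (u i) (SingAux.mulVecE B (v i)) : ℂ) := by
      intro i; rw [hadd i, inner_add_right]
    rw [Finset.sum_congr rfl (fun i _ => e1 i), Finset.sum_add_distrib, Complex.add_re]
  have hAub := SingAux.kyfan_ub A sA hsA t0 ht0 u v hu hv
  have hBub := SingAux.kyfan_ub B sB hsB t0 ht0 u v hu hv
  have hsum : ∑ j ∈ univ.filter (fun j : Fin n => (j : ℕ) < k), (sA + sB) j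
      = (∑ j ∈ univ.filter (fun j : Fin n => (j : ℕ) < k), sA j)
        + ∑ j ∈ univ.filter (fun j : Fin n => (j : ℕ) < k), sB j := by
    rw [← Finset.sum_add_distrib]; rfl
  rw [hsum]
  calc ∑ i ∈ t, sAB i ≤ ∑ j ∈ univ.filter (fun j : Fin n => (j : ℕ) < k), sAB j := h1
  _ = (∑ i ∈ t0, (inner ℂ (u i) (SingAux.mulVecE (A + B) (v i)) : ℂ)).re := heq
  _ = (∑ i ∈ t0, (inner ℂ (u i) (SingAux.mulVecE A (v i)) : ℂ)).re
        + (∑ i ∈ t0, (inner ℂ (u i) (SingAux.mulVecE B (v i)) : ℂ)).re := hsplit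
  _ ≤ _ := add_le_add hAub hBub
end

section
/- For Hermitian operators A, B on an n-dimensional inner product space, |Λ(A) − Λ(B)| ≺_w S(A−B), where Λ(·) is the vector of eigenvalues in nonincreasing order and S(·) is the vector of singular values in nonincreasing order. -/
open Finset Matrix

namespace Lid


variable {n : ℕ}

/-- Tuples are rearrangements of each other. -/
def PermEq {α : Type*} (f g : Fin n → α) : Prop := (List.ofFn f).Perm (List.ofFn g)

namespace PermEq

variable {α β : Type*} {f g h : Fin n → α}

lemma refl (f : Fin n → α) : PermEq f f := List.Perm.refl _

lemma symm (hfg : PermEq f g) : PermEq g f := List.Perm.symm hfg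

lemma trans (h1 : PermEq f g) (h2 : PermEq g h) : PermEq f h := List.Perm.trans h1 h2

lemma of_comp (σ : Equiv.Perm (Fin n)) (g : Fin n → α) : PermEq (g ∘ σ) g :=
  Equiv.Perm.ofFn_comp_perm σ g

lemma map (h : α → β) (hfg : PermEq f g) : PermEq (h ∘ f) (h ∘ g) := by
  unfold PermEq at *
  rw [← List.map_ofFn (f := f) (g := h), ← List.map_ofFn (f := g) (g := h)]
  exact hfg.map h

lemma sum_eq (hfg : PermEq f g) [AddCommMonoid α] : ∑ i, f i = ∑ i, g i := by
  rw [← List.sum_ofFn, ← List.sum_ofFn]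
  exact List.Perm.sum_eq hfg

end PermEq

lemma monotone_unique {f g : Fin n → ℝ} (hf : Monotone f) (hg : Monotone g)
    (h : PermEq f g) : f = g :=
  List.ofFn_injective <| List.Perm.eq_of_sortedLE hf.sortedLE_ofFn hg.sortedLE_ofFn h

lemma antitone_unique {f g : Fin n → ℝ} (hf : Antitone f) (hg : Antitone g)
    (h : PermEq f g) : f = g := by
  have hf' : Monotone (Neg.neg ∘ f) := fun i j hij => neg_le_neg (hf hij)
  have hg' : Monotone (Neg.neg ∘ g) := fun i j hij => neg_le_neg (hg hij)
  have := monotone_unique hf' hg' (h.map Neg.neg)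
  funext i
  have := congrFun this i
  simpa using this

/-- Sort a tuple in nonincreasing order. -/
noncomputable def sortD (f : Fin n → ℝ) : Fin n → ℝ := f ∘ Tuple.sort (fun i => - f i)

lemma sortD_antitone (f : Fin n → ℝ) : Antitone (sortD f) := by
  have h := Tuple.monotone_sort (fun i => - f i)
  intro i j hij
  have := h hij
  simp only [Function.comp_apply] at this
  simpa [sortD] using neg_le_neg_iff.mp (by simpa using this)

lemma sortD_permEq (f : Fin n → ℝ) : PermEq (sortD f) f := PermEq.of_comp _ _

lemma eq_sortD_of_antitone {f g : Fin n → ℝ} (hg : Antitone g) (h : PermEq g f) :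
    g = sortD f :=
  antitone_unique hg (sortD_antitone f) (h.trans (sortD_permEq f).symm)

lemma sortD_comp_mono {f : Fin n → ℝ} {h : ℝ → ℝ} (hh : Monotone h) :
    sortD (h ∘ f) = h ∘ sortD f := by
  refine (eq_sortD_of_antitone (hh.comp_antitone (sortD_antitone f)) ?_).symm
  exact (sortD_permEq f).map h

/-- key counting fact -/
lemma card_filter_lt (k : ℕ) (hk : k ≤ n) :
    (univ.filter (fun j : Fin n => (j : ℕ) < k)).card = k := by
  rcases eq_or_lt_of_le hk with h | h
  · subst h
    rw [Finset.filter_true_of_mem (fun j _ => j.isLt)]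
    simp
  · have : univ.filter (fun j : Fin n => (j : ℕ) < k) = Finset.Iio ⟨k, h⟩ := by
      ext j; simp [Fin.lt_def]
    rw [this, Fin.card_Iio]

lemma strictMono_le {k : ℕ} (φ : Fin k → Fin n) (hφ : StrictMono φ) (j : Fin k) :
    (j : ℕ) ≤ (φ j : ℕ) := by
  suffices h : ∀ (m : ℕ) (hm : m < k), m ≤ (φ ⟨m, hm⟩ : ℕ) by
    have := h j.1 j.2
    simpa using this
  intro m
  induction m with
  | zero => intro _; exact Nat.zero_le _
  | succ p ihp =>
    intro hm
    have hp : p < k := Nat.lt_of_succ_lt hm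
    have h1 : (⟨p, hp⟩ : Fin k) < ⟨p+1, hm⟩ := by simp [Fin.lt_def]
    have h3 : (φ ⟨p, hp⟩ : ℕ) < (φ ⟨p+1, hm⟩ : ℕ) := hφ h1
    have h2 := ihp hp
    omega

/-- sum over a finset is at most the top-`card` sum, for antitone tuples. -/
lemma sum_le_sum_topk {s : Fin n → ℝ} (hs : Antitone s) (t : Finset (Fin n)) :
    ∑ i ∈ t, s i ≤ ∑ j ∈ univ.filter (fun j : Fin n => (j : ℕ) < t.card), s j := by
  classical
  set k := t.card with hk
  have hkn : k ≤ n := by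
    simpa using (Finset.card_le_univ t)
  have e := t.orderIsoOfFin hk.symm
  -- left sum as sum over Fin k
  have hL : ∑ i ∈ t, s i = ∑ j : Fin k, s (e j) := by
    rw [← Finset.sum_coe_sort t]
    exact (Equiv.sum_comp e.toEquiv (fun x : t => s x)).symm
  -- right sum as sum over Fin k
  have hmem : ∀ j : Fin k, (⟨(j : ℕ), lt_of_lt_of_le j.isLt hkn⟩ : Fin n)
      ∈ univ.filter (fun j : Fin n => (j : ℕ) < k) := by
    intro j; simp [j.isLt]
  have hR : ∑ j ∈ univ.filter (fun j : Fin n => (j : ℕ) < k), s j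
      = ∑ j : Fin k, s ⟨(j : ℕ), lt_of_lt_of_le j.isLt hkn⟩ := by
    refine Finset.sum_bij' (i := fun (a : Fin n) (ha : a ∈ univ.filter (fun j : Fin n => (j : ℕ) < k)) => (⟨(a : ℕ), by simpa using ha⟩ : Fin k))
      (j := fun (a : Fin k) _ => (⟨(a : ℕ), lt_of_lt_of_le a.isLt hkn⟩ : Fin n)) ?_ ?_ ?_ ?_ ?_
    · intro a _; exact Finset.mem_univ _
    · intro a _; exact hmem a
    · intro a _; apply Fin.ext; rfl
    · intro a _; apply Fin.ext; rfl
    · intro a _; rfl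
  rw [hL, hR]
  refine Finset.sum_le_sum fun j _ => ?_
  refine hs ?_
  have h1 : ((⟨(j : ℕ), lt_of_lt_of_le j.isLt hkn⟩ : Fin n) : ℕ) ≤ ((e j : Fin n) : ℕ) := by
    have : StrictMono (fun j : Fin k => (e j : Fin n)) := fun x y hxy => by
      exact_mod_cast (e.lt_iff_lt.mpr hxy)
    simpa using strictMono_le _ this j
  exact Fin.le_def.mpr h1




/-- real quadratic form of a matrix -/
noncomputable def QF (M : Matrix (Fin n) (Fin n) ℂ) (v : Fin n → ℂ) : ℝ :=
  (star v ⬝ᵥ (M *ᵥ v)).re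

/-- squared norm -/
noncomputable def Nsq (v : Fin n → ℂ) : ℝ := ∑ i, Complex.normSq (v i)

lemma Nsq_nonneg (v : Fin n → ℂ) : 0 ≤ Nsq v :=
  Finset.sum_nonneg fun _ _ => Complex.normSq_nonneg _

lemma Nsq_pos {v : Fin n → ℂ} (hv : v ≠ 0) : 0 < Nsq v := by
  have : ∃ i, v i ≠ 0 := by
    by_contra hc
    push_neg at hc
    exact hv (funext hc)
  obtain ⟨i, hi⟩ := this
  exact Finset.sum_pos' (fun j _ => Complex.normSq_nonneg _)
    ⟨i, Finset.mem_univ i, Complex.normSq_pos.2 hi⟩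

/-- conjugated diagonal matrix -/
noncomputable def UDU (U : Matrix (Fin n) (Fin n) ℂ) (f : Fin n → ℝ) :
    Matrix (Fin n) (Fin n) ℂ :=
  U * diagonal (fun i => (f i : ℂ)) * Uᴴ

lemma QF_add (M N : Matrix (Fin n) (Fin n) ℂ) (v : Fin n → ℂ) :
    QF (M + N) v = QF M v + QF N v := by
  simp [QF, add_mulVec, dotProduct_add]

lemma herm_UDU (U : Matrix (Fin n) (Fin n) ℂ) (f : Fin n → ℝ) : (UDU U f).IsHermitian := by
  unfold UDU Matrix.IsHermitian
  rw [conjTranspose_mul, conjTranspose_mul, conjTranspose_conjTranspose,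
    diagonal_conjTranspose, mul_assoc]
  have hd : (star fun i => ((f i : ℝ) : ℂ)) = fun i => ((f i : ℝ) : ℂ) := by
    funext i
    simp [Pi.star_apply]
  rw [hd]

lemma UDU_add (U : Matrix (Fin n) (Fin n) ℂ) (f g : Fin n → ℝ) :
    UDU U f + UDU U g = UDU U (f + g) := by
  unfold UDU
  have hfun : (fun i => ((f i : ℝ) : ℂ) + ((g i : ℝ) : ℂ)) = fun i => (((f + g) i : ℝ) : ℂ) := by
    funext i
    simp [Pi.add_apply]
  rw [← add_mul, ← mul_add, diagonal_add, hfun]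

section unitary

variable {U : Matrix (Fin n) (Fin n) ℂ}

lemma U_mul_star (hU : U ∈ Matrix.unitaryGroup (Fin n) ℂ) : U * Uᴴ = 1 := by
  have := (Matrix.mem_unitaryGroup_iff).mp hU
  simpa [Matrix.star_eq_conjTranspose] using this

lemma star_mul_U (hU : U ∈ Matrix.unitaryGroup (Fin n) ℂ) : Uᴴ * U = 1 := by
  have := (Matrix.mem_unitaryGroup_iff').mp hU
  simpa [Matrix.star_eq_conjTranspose] using this

lemma dot_UDU (hU : U ∈ Matrix.unitaryGroup (Fin n) ℂ) (f : Fin n → ℝ) (x : Fin n → ℂ) :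
    star (U *ᵥ x) ⬝ᵥ ((UDU U f) *ᵥ (U *ᵥ x)) = ((∑ i, f i * Complex.normSq (x i) : ℝ) : ℂ) := by
  rw [mulVec_mulVec]
  have h1 : UDU U f * U = U * diagonal (fun i => (f i : ℂ)) := by
    unfold UDU
    rw [mul_assoc, star_mul_U hU, mul_one]
  rw [h1, star_mulVec, dotProduct_mulVec, vecMul_vecMul, ← mul_assoc, star_mul_U hU, one_mul,
    ← dotProduct_mulVec]
  have h2 : (diagonal (fun i => (f i : ℂ))) *ᵥ x = fun i => (f i : ℂ) * x i := by
    funext i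
    simp [mulVec_diagonal]
  rw [h2]
  unfold dotProduct
  push_cast
  congr 1
  funext i
  simp only [Pi.star_apply]
  rw [show star (x i) * ((f i : ℂ) * x i) = (f i : ℂ) * (star (x i) * x i) by ring]
  rw [Complex.star_def, ← Complex.normSq_eq_conj_mul_self]

lemma QF_UDU (hU : U ∈ Matrix.unitaryGroup (Fin n) ℂ) (f : Fin n → ℝ) (x : Fin n → ℂ) :
    QF (UDU U f) (U *ᵥ x) = ∑ i, f i * Complex.normSq (x i) := by
  rw [QF, dot_UDU hU, Complex.ofReal_re]

lemma Nsq_mulVec (hU : U ∈ Matrix.unitaryGroup (Fin n) ℂ) (x : Fin n → ℂ) :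
    Nsq (U *ᵥ x) = Nsq x := by
  have h := dot_UDU hU (fun _ => (1 : ℝ)) x
  have hudu : UDU U (fun _ => (1:ℝ)) = 1 := by
    unfold UDU
    simp [diagonal_one, U_mul_star hU]
  rw [hudu] at h
  have hl : star (U *ᵥ x) ⬝ᵥ ((1 : Matrix (Fin n) (Fin n) ℂ) *ᵥ (U *ᵥ x))
      = star (U *ᵥ x) ⬝ᵥ (U *ᵥ x) := by rw [one_mulVec]
  have h3 : ∀ v : Fin n → ℂ, star v ⬝ᵥ v = ((Nsq v : ℝ) : ℂ) := by
    intro v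
    unfold dotProduct Nsq
    push_cast
    congr 1
    funext i
    simp only [Pi.star_apply]
    rw [Complex.star_def, ← Complex.normSq_eq_conj_mul_self]
  have h4 := (h3 (U *ᵥ x)).symm.trans (hl.symm.trans h)
  have h5 : Nsq (U *ᵥ x) = ∑ i, (1:ℝ) * Complex.normSq (x i) := by
    exact_mod_cast h4
  simpa [Nsq] using h5

/-- every vector is `U *ᵥ x` -/
lemma exists_mulVec (hU : U ∈ Matrix.unitaryGroup (Fin n) ℂ) (v : Fin n → ℂ) :
    ∃ x, v = U *ᵥ x := by
  refine ⟨Uᴴ *ᵥ v, ?_⟩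
  rw [mulVec_mulVec, U_mul_star hU, one_mulVec]

lemma QF_UDU_nonneg (hU : U ∈ Matrix.unitaryGroup (Fin n) ℂ) {f : Fin n → ℝ}
    (hf : ∀ i, 0 ≤ f i) (v : Fin n → ℂ) : 0 ≤ QF (UDU U f) v := by
  obtain ⟨x, rfl⟩ := exists_mulVec hU v
  rw [QF_UDU hU]
  exact Finset.sum_nonneg fun i _ => mul_nonneg (hf i) (Complex.normSq_nonneg _)

lemma QF_UDU_le (hU : U ∈ Matrix.unitaryGroup (Fin n) ℂ) {f : Fin n → ℝ} {c : ℝ}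
    (hf : ∀ i, f i ≤ c) (v : Fin n → ℂ) : QF (UDU U f) v ≤ c * Nsq v := by
  obtain ⟨x, rfl⟩ := exists_mulVec hU v
  rw [QF_UDU hU, Nsq_mulVec hU, Nsq, Finset.mul_sum]
  exact Finset.sum_le_sum fun i _ =>
    mul_le_mul_of_nonneg_right (hf i) (Complex.normSq_nonneg _)

lemma trace_UDU (hU : U ∈ Matrix.unitaryGroup (Fin n) ℂ) (f : Fin n → ℝ) :
    (UDU U f).trace = ((∑ i, f i : ℝ) : ℂ) := by
  unfold UDU
  rw [trace_mul_cycle, star_mul_U hU, one_mul, trace_diagonal]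
  push_cast
  rfl

end unitary


/-- spectral theorem in UDU form -/
lemma spectral {M : Matrix (Fin n) (Fin n) ℂ} (hM : M.IsHermitian) :
    M = UDU (hM.eigenvectorUnitary : Matrix (Fin n) (Fin n) ℂ) hM.eigenvalues := by
  have h := hM.spectral_theorem
  unfold UDU
  rw [← Matrix.star_eq_conjTranspose]
  exact h

lemma eigenvectorUnitary_mem {M : Matrix (Fin n) (Fin n) ℂ} (hM : M.IsHermitian) :
    (hM.eigenvectorUnitary : Matrix (Fin n) (Fin n) ℂ) ∈ Matrix.unitaryGroup (Fin n) ℂ :=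
  hM.eigenvectorUnitary.2

/-- the subspace of vectors supported on S -/
noncomputable def coordSub (S : Finset (Fin n)) : Submodule ℂ (Fin n → ℂ) where
  carrier := {x | ∀ j ∉ S, x j = 0}
  add_mem' := by intro a b ha hb j hj; simp [ha j hj, hb j hj]
  zero_mem' := by intro j _; rfl
  smul_mem' := by intro c x hx j hj; simp [hx j hj]

lemma coordSub_eq_span (S : Finset (Fin n)) :
    coordSub S = Submodule.span ℂ ((fun j => (Pi.single j 1 : Fin n → ℂ)) '' S) := by
  apply le_antisymm
  · intro x hx
    have hxsum : x = ∑ j ∈ S, x j • (Pi.single j 1 : Fin n → ℂ) := by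
      funext j'
      rw [Finset.sum_apply]
      by_cases hj' : j' ∈ S
      · rw [Finset.sum_eq_single j']
        · simp
        · intro b _ hb
          simp [Pi.single_apply, hb.symm]
        · intro h; exact absurd hj' h
      · rw [hx j' hj']
        apply (Finset.sum_eq_zero _).symm
        intro b hb
        have : b ≠ j' := fun h => hj' (h ▸ hb)
        simp [Pi.single_apply, this]
    rw [hxsum]
    apply Submodule.sum_mem
    intro j hj
    exact Submodule.smul_mem _ _ (Submodule.subset_span ⟨j, hj, rfl⟩)
  · rw [Submodule.span_le]
    rintro - ⟨j, hj, rfl⟩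
    intro j' hj'
    have : j ≠ j' := fun h => hj' (h ▸ hj)
    simp [Pi.single_apply, this.symm]

lemma finrank_coordSub (S : Finset (Fin n)) :
    Module.finrank ℂ (coordSub S) = S.card := by
  rw [coordSub_eq_span]
  have hli : LinearIndependent ℂ (fun j : S => (Pi.single (j : Fin n) 1 : Fin n → ℂ)) := by
    have h := (Pi.basisFun ℂ (Fin n)).linearIndependent
    have h2 := h.comp (fun j : S => (j : Fin n)) Subtype.val_injective
    convert h2 using 1
    funext j
    simp [Pi.basisFun_apply]
  have : ((fun j => (Pi.single j 1 : Fin n → ℂ)) '' S) = Set.range (fun j : S => (Pi.single (j : Fin n) 1 : Fin n → ℂ)) := by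
    ext x
    simp
  rw [this, finrank_span_eq_card hli]
  simp

/-- mulVec by a unitary as a linear equivalence -/
noncomputable def uduEquiv {U : Matrix (Fin n) (Fin n) ℂ}
    (hU : U ∈ Matrix.unitaryGroup (Fin n) ℂ) : (Fin n → ℂ) ≃ₗ[ℂ] (Fin n → ℂ) :=
  LinearEquiv.ofLinear (Matrix.mulVecLin U) (Matrix.mulVecLin Uᴴ)
    (by
      rw [← Matrix.mulVecLin_mul]
      have : U * Uᴴ = 1 := by
        simpa [Matrix.star_eq_conjTranspose] using (Matrix.mem_unitaryGroup_iff).mp hU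
      rw [this, Matrix.mulVecLin_one])
    (by
      rw [← Matrix.mulVecLin_mul]
      have : Uᴴ * U = 1 := by
        simpa [Matrix.star_eq_conjTranspose] using (Matrix.mem_unitaryGroup_iff').mp hU
      rw [this, Matrix.mulVecLin_one])

/-- span of columns of U indexed by S -/
noncomputable def colSpan {U : Matrix (Fin n) (Fin n) ℂ}
    (hU : U ∈ Matrix.unitaryGroup (Fin n) ℂ) (S : Finset (Fin n)) :
    Submodule ℂ (Fin n → ℂ) :=
  Submodule.map (uduEquiv hU : (Fin n → ℂ) →ₗ[ℂ] (Fin n → ℂ)) (coordSub S)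

lemma finrank_colSpan {U : Matrix (Fin n) (Fin n) ℂ}
    (hU : U ∈ Matrix.unitaryGroup (Fin n) ℂ) (S : Finset (Fin n)) :
    Module.finrank ℂ (colSpan hU S) = S.card := by
  rw [colSpan, LinearEquiv.finrank_map_eq, finrank_coordSub]

lemma mem_colSpan {U : Matrix (Fin n) (Fin n) ℂ}
    (hU : U ∈ Matrix.unitaryGroup (Fin n) ℂ) {S : Finset (Fin n)} {v : Fin n → ℂ}
    (hv : v ∈ colSpan hU S) : ∃ x, (∀ j ∉ S, x j = 0) ∧ v = U *ᵥ x := by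
  obtain ⟨x, hx, rfl⟩ := hv
  exact ⟨x, hx, rfl⟩

/-- two subspaces of total dimension > n intersect nontrivially -/
lemma exists_mem_inter {V W : Submodule ℂ (Fin n → ℂ)}
    (h : n < Module.finrank ℂ V + Module.finrank ℂ W) :
    ∃ v : Fin n → ℂ, v ≠ 0 ∧ v ∈ V ∧ v ∈ W := by
  have hsup : Module.finrank ℂ (V ⊔ W : Submodule ℂ (Fin n → ℂ)) ≤ n := by
    have := Submodule.finrank_le (V ⊔ W : Submodule ℂ (Fin n → ℂ))
    rwa [Module.finrank_pi, Fintype.card_fin] at this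
  have hkey := Submodule.finrank_sup_add_finrank_inf_eq V W
  have hpos : 0 < Module.finrank ℂ (V ⊓ W : Submodule ℂ (Fin n → ℂ)) := by omega
  have hne : (V ⊓ W : Submodule ℂ (Fin n → ℂ)) ≠ ⊥ := by
    intro hbot
    rw [hbot, finrank_bot] at hpos
    exact lt_irrefl _ hpos
  obtain ⟨v, hv, hv0⟩ := Submodule.exists_mem_ne_zero_of_ne_bot hne
  exact ⟨v, hv0, hv.1, hv.2⟩


end Lid

namespace Lid
variable {n : ℕ}

noncomputable def mu {M : Matrix (Fin n) (Fin n) ℂ} (hM : M.IsHermitian) : Fin n → ℝ :=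
  sortD hM.eigenvalues

lemma mu_antitone {M : Matrix (Fin n) (Fin n) ℂ} (hM : M.IsHermitian) : Antitone (mu hM) :=
  sortD_antitone _

lemma mu_permEq {M : Matrix (Fin n) (Fin n) ℂ} (hM : M.IsHermitian) :
    PermEq (mu hM) hM.eigenvalues := sortD_permEq _

lemma sum_mul_nsq_ge {f : Fin n → ℝ} {m : ℝ} {x : Fin n → ℂ}
    (h : ∀ j, x j ≠ 0 → m ≤ f j) :
    m * Nsq x ≤ ∑ j, f j * Complex.normSq (x j) := by
  rw [Nsq, Finset.mul_sum]
  refine Finset.sum_le_sum fun j _ => ?_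
  by_cases hx : x j = 0
  · simp [hx]
  · exact mul_le_mul_of_nonneg_right (h j hx) (Complex.normSq_nonneg _)

lemma sum_mul_nsq_le {f : Fin n → ℝ} {m : ℝ} {x : Fin n → ℂ}
    (h : ∀ j, x j ≠ 0 → f j ≤ m) :
    (∑ j, f j * Complex.normSq (x j)) ≤ m * Nsq x := by
  rw [Nsq, Finset.mul_sum]
  refine Finset.sum_le_sum fun j _ => ?_
  by_cases hx : x j = 0
  · simp [hx]
  · exact mul_le_mul_of_nonneg_right (h j hx) (Complex.normSq_nonneg _)

/-- Workhorse: Courant–Fischer style comparison. -/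
lemma mu_le_mu_add {X Y : Matrix (Fin n) (Fin n) ℂ} (hX : X.IsHermitian) (hY : Y.IsHermitian)
    {c : ℝ} (h : ∀ v, QF X v ≤ QF Y v + c * Nsq v) (i : Fin n) :
    mu hX i ≤ mu hY i + c := by
  classical
  set eX := hX.eigenvalues with heX
  set eY := hY.eigenvalues with heY
  set σX := Tuple.sort (fun j => - eX j) with hσX
  set σY := Tuple.sort (fun j => - eY j) with hσY
  have hmuX : mu hX = eX ∘ σX := rfl
  have hmuY : mu hY = eY ∘ σY := rfl
  set S := (Finset.Iic i).image σX with hS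
  set T := (Finset.Ici i).image σY with hT
  have hcardS : S.card = (i : ℕ) + 1 := by
    rw [hS, Finset.card_image_of_injective _ σX.injective, Fin.card_Iic]
  have hcardT : T.card = n - (i : ℕ) := by
    rw [hT, Finset.card_image_of_injective _ σY.injective, Fin.card_Ici]
  have hUX := eigenvectorUnitary_mem hX
  have hUY := eigenvectorUnitary_mem hY
  have hdim : n < Module.finrank ℂ (colSpan hUX S) + Module.finrank ℂ (colSpan hUY T) := by
    rw [finrank_colSpan, finrank_colSpan, hcardS, hcardT]
    have := i.isLt
    omega
  obtain ⟨v, hv0, hvS, hvT⟩ := exists_mem_inter hdim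
  obtain ⟨x, hxsupp, hvx⟩ := mem_colSpan hUX hvS
  obtain ⟨y, hysupp, hvy⟩ := mem_colSpan hUY hvT
  have hX1 : QF X v = ∑ j, eX j * Complex.normSq (x j) := by
    conv_lhs => rw [spectral hX, hvx]
    exact QF_UDU hUX _ _
  have hY1 : QF Y v = ∑ j, eY j * Complex.normSq (y j) := by
    conv_lhs => rw [spectral hY, hvy]
    exact QF_UDU hUY _ _
  have hNx : Nsq v = Nsq x := by rw [hvx]; exact Nsq_mulVec hUX x
  have hNy : Nsq v = Nsq y := by rw [hvy]; exact Nsq_mulVec hUY y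
  have hlow : mu hX i * Nsq v ≤ QF X v := by
    rw [hX1, hNx]
    refine sum_mul_nsq_ge fun j hj => ?_
    have hjS : j ∈ S := by
      by_contra hc
      exact hj (hxsupp j hc)
    obtain ⟨j', hj', rfl⟩ := Finset.mem_image.mp hjS
    have : mu hX i ≤ mu hX j' := mu_antitone hX (Finset.mem_Iic.mp hj')
    rwa [hmuX] at this
  have hhigh : QF Y v ≤ mu hY i * Nsq v := by
    rw [hY1, hNy]
    refine sum_mul_nsq_le fun j hj => ?_
    have hjT : j ∈ T := by
      by_contra hc
      exact hj (hysupp j hc)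
    obtain ⟨j', hj', rfl⟩ := Finset.mem_image.mp hjT
    have : mu hY j' ≤ mu hY i := mu_antitone hY (Finset.mem_Ici.mp hj')
    rwa [hmuY] at this
  have hfin : mu hX i * Nsq v ≤ (mu hY i + c) * Nsq v := by
    calc mu hX i * Nsq v ≤ QF X v := hlow
    _ ≤ QF Y v + c * Nsq v := h v
    _ ≤ mu hY i * Nsq v + c * Nsq v := by linarith
    _ = (mu hY i + c) * Nsq v := by ring
  exact le_of_mul_le_mul_right hfin (Nsq_pos hv0)


lemma det_conj {U : Matrix (Fin n) (Fin n) ℂ} (hU : U ∈ Matrix.unitaryGroup (Fin n) ℂ)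
    (M : Matrix (Fin n) (Fin n) ℂ) : (U * M * Uᴴ).det = M.det := by
  rw [det_mul, det_mul, mul_comm, ← mul_assoc, mul_comm (Uᴴ.det), ← det_mul, U_mul_star hU,
    det_one, one_mul]

lemma det_smul_one_sub {U : Matrix (Fin n) (Fin n) ℂ} (hU : U ∈ Matrix.unitaryGroup (Fin n) ℂ)
    (f : Fin n → ℝ) (x : ℂ) :
    (x • (1 : Matrix (Fin n) (Fin n) ℂ) - UDU U f).det = ∏ i, (x - (f i : ℂ)) := by
  have h1 : x • (1 : Matrix (Fin n) (Fin n) ℂ) - UDU U f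
      = U * (diagonal (fun i => x - (f i : ℂ))) * Uᴴ := by
    have h2 : x • (1 : Matrix (Fin n) (Fin n) ℂ) = U * (x • 1) * Uᴴ := by
      rw [mul_smul_comm, smul_mul_assoc, mul_one, U_mul_star hU]
    rw [h2]
    unfold UDU
    rw [← sub_mul, ← mul_sub, smul_one_eq_diagonal, diagonal_sub]
  rw [h1, det_conj hU, det_diagonal]

/-- multiset of coerced tuple -/
lemma prod_X_sub_C_eq (s : Fin n → ℂ) :
    ∏ i, (Polynomial.X - Polynomial.C (s i))
      = (Multiset.map (fun a => Polynomial.X - Polynomial.C a)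
          (↑(List.ofFn s) : Multiset ℂ)).prod := by
  rw [Finset.prod_eq_multiset_prod, Fin.univ_def, List.ofFn_eq_map, ← Multiset.map_coe,
    Multiset.map_map]
  rfl

/-- eigenvalues of a conjugated diagonal matrix are the diagonal entries, as multisets -/
lemma permEq_eigenvalues {M : Matrix (Fin n) (Fin n) ℂ} (hM : M.IsHermitian)
    {U : Matrix (Fin n) (Fin n) ℂ} (hU : U ∈ Matrix.unitaryGroup (Fin n) ℂ)
    {f : Fin n → ℝ} (hMU : M = UDU U f) : PermEq f hM.eigenvalues := by
  have key : ∀ x : ℂ, ∏ i, (x - (f i : ℂ)) = ∏ i, (x - (hM.eigenvalues i : ℂ)) := by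
    intro x
    rw [← det_smul_one_sub hU f x, ← det_smul_one_sub (eigenvectorUnitary_mem hM) _ x,
      ← hMU, ← spectral hM]
  have hpoly : ∏ i, (Polynomial.X - Polynomial.C ((f i : ℂ)))
      = ∏ i, (Polynomial.X - Polynomial.C ((hM.eigenvalues i : ℂ))) := by
    apply Polynomial.funext
    intro r
    rw [Polynomial.eval_prod, Polynomial.eval_prod]
    simpa using key r
  rw [prod_X_sub_C_eq, prod_X_sub_C_eq] at hpoly
  have hroots := congrArg Polynomial.roots hpoly
  rw [Polynomial.roots_multiset_prod_X_sub_C, Polynomial.roots_multiset_prod_X_sub_C] at hroots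
  have hofn : ∀ g : Fin n → ℝ, (↑(List.ofFn (fun i => ((g i : ℝ) : ℂ))) : Multiset ℂ)
      = Multiset.map Complex.ofReal (↑(List.ofFn g) : Multiset ℝ) := by
    intro g
    rw [Multiset.map_coe, List.map_ofFn]
    rfl
  rw [hofn, hofn] at hroots
  have := Multiset.map_injective Complex.ofReal_injective hroots
  exact Multiset.coe_eq_coe.mp this

lemma sum_mu {M : Matrix (Fin n) (Fin n) ℂ} (hM : M.IsHermitian) :
    ∑ i, mu hM i = M.trace.re := by
  rw [(mu_permEq hM).sum_eq]
  conv_rhs => rw [spectral hM, trace_UDU (eigenvectorUnitary_mem hM)]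
  rw [Complex.ofReal_re]

lemma mu_nonneg {M : Matrix (Fin n) (Fin n) ℂ} (hM : M.IsHermitian)
    (h0 : ∀ v, 0 ≤ QF M v) (i : Fin n) : 0 ≤ mu hM i := by
  have heig : ∀ j, 0 ≤ hM.eigenvalues j := by
    intro j
    have hW := eigenvectorUnitary_mem hM
    have h := h0 ((hM.eigenvectorUnitary : Matrix (Fin n) (Fin n) ℂ) *ᵥ Pi.single j 1)
    have heq : QF M ((hM.eigenvectorUnitary : Matrix (Fin n) (Fin n) ℂ) *ᵥ Pi.single j 1)
        = ∑ l, hM.eigenvalues l * Complex.normSq ((Pi.single j 1 : Fin n → ℂ) l) := by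
      rw [congrArg (fun A => QF A ((hM.eigenvectorUnitary : Matrix (Fin n) (Fin n) ℂ) *ᵥ
        Pi.single j 1)) (spectral hM)]
      exact QF_UDU hW _ _
    have hs : ∑ l, hM.eigenvalues l * Complex.normSq ((Pi.single j 1 : Fin n → ℂ) l)
        = hM.eigenvalues j := by
      rw [Finset.sum_eq_single j]
      · simp
      · intro b _ hb
        simp [Pi.single_apply, hb]
      · intro hj
        exact absurd (Finset.mem_univ j) hj
    rw [heq, hs] at h
    exact h
  have : mu hM = hM.eigenvalues ∘ (Tuple.sort (fun j => - hM.eigenvalues j)) := rfl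
  rw [this]
  exact heig _

/-- Lidskii inequality for a positive perturbation. -/
lemma LP {B P : Matrix (Fin n) (Fin n) ℂ} (hB : B.IsHermitian) (hP : P.IsHermitian)
    (hP0 : ∀ v, 0 ≤ QF P v) (hBP : (B + P).IsHermitian) (I : Finset (Fin n)) :
    ∑ i ∈ I, (mu hBP i - mu hB i)
      ≤ ∑ j ∈ univ.filter (fun j : Fin n => (j : ℕ) < I.card), mu hP j := by
  classical
  set k := I.card with hk
  have hkn : k ≤ n := by simpa using Finset.card_le_univ I
  rcases eq_or_lt_of_le hkn with hkeq | hklt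
  · -- k = n : I = univ, equality by traces
    have hIuniv : I = univ := by
      apply Finset.eq_univ_of_card
      simpa using hkeq
    have hFuniv : univ.filter (fun j : Fin n => (j : ℕ) < k) = univ := by
      apply Finset.filter_true_of_mem
      intro j _
      rw [hkeq]
      exact j.isLt
    rw [hIuniv, hFuniv, Finset.sum_sub_distrib, sum_mu, sum_mu, sum_mu]
    rw [Matrix.trace_add]
    simp
  · -- k < n
    set c := mu hP ⟨k, hklt⟩ with hc
    have hc0 : 0 ≤ c := mu_nonneg hP hP0 _
    set W := (hP.eigenvectorUnitary : Matrix (Fin n) (Fin n) ℂ) with hWdef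
    have hW := eigenvectorUnitary_mem hP
    set eP := hP.eigenvalues with heP
    set Q := UDU W (fun i => max (eP i - c) 0) with hQdef
    set R := UDU W (fun i => min (eP i) c) with hRdef
    have hQR : Q + R = P := by
      rw [hQdef, hRdef, UDU_add]
      have : ((fun i => max (eP i - c) 0) + fun i => min (eP i) c) = eP := by
        funext i
        rcases le_total (eP i) c with h | h
        · simp [Pi.add_apply, max_eq_right (sub_nonpos.mpr h), min_eq_left h]
        · simp [Pi.add_apply, max_eq_left (sub_nonneg.mpr h), min_eq_right h]
      rw [this, ← spectral hP]
    have hQ : Q.IsHermitian := herm_UDU _ _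
    have hBQ : (B + Q).IsHermitian := hB.add hQ
    have h1 : ∀ i, mu hBP i ≤ mu hBQ i + c := by
      refine mu_le_mu_add hBP hBQ fun v => ?_
      have hsplit : B + P = (B + Q) + R := by rw [add_assoc, hQR]
      rw [hsplit, QF_add]
      have := QF_UDU_le hW (f := fun i => min (eP i) c) (c := c)
        (fun i => min_le_right _ _) v
      linarith
    have h2 : ∀ i, mu hB i ≤ mu hBQ i := by
      intro i
      have := mu_le_mu_add hB hBQ (c := 0) (fun v => by
        rw [QF_add]
        have := QF_UDU_nonneg hW (f := fun i => max (eP i - c) 0)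
          (fun i => le_max_right _ _) v
        linarith) i
      simpa using this
    have step1 : ∑ i ∈ I, (mu hBP i - mu hB i)
        ≤ (∑ i ∈ I, (mu hBQ i - mu hB i)) + k * c := by
      have : ∀ i ∈ I, mu hBP i - mu hB i ≤ (mu hBQ i - mu hB i) + c := by
        intro i _
        have := h1 i
        linarith
      calc ∑ i ∈ I, (mu hBP i - mu hB i) ≤ ∑ i ∈ I, ((mu hBQ i - mu hB i) + c) :=
            Finset.sum_le_sum this
        _ = (∑ i ∈ I, (mu hBQ i - mu hB i)) + k * c := by
            rw [Finset.sum_add_distrib, Finset.sum_const, nsmul_eq_mul, hk]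
    have step2 : ∑ i ∈ I, (mu hBQ i - mu hB i) ≤ ∑ i : Fin n, (mu hBQ i - mu hB i) := by
      refine Finset.sum_le_sum_of_subset_of_nonneg (Finset.subset_univ I) ?_
      intro i _ _
      have := h2 i
      linarith
    have step3 : ∑ i : Fin n, (mu hBQ i - mu hB i) = ∑ i, max (eP i - c) 0 := by
      rw [Finset.sum_sub_distrib, sum_mu, sum_mu, Matrix.trace_add]
      have : Q.trace = ((∑ i, max (eP i - c) 0 : ℝ) : ℂ) := trace_UDU hW _
      rw [Complex.add_re, this, Complex.ofReal_re]
      ring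
    have step4 : ∑ i, max (eP i - c) 0 = ∑ i, max (mu hP i - c) 0 := by
      have hpe : PermEq ((fun x => max (x - c) 0) ∘ mu hP) ((fun x => max (x - c) 0) ∘ eP) :=
        (mu_permEq hP).map _
      exact (hpe.sum_eq).symm
    have step5 : ∑ i, max (mu hP i - c) 0
        = ∑ j ∈ univ.filter (fun j : Fin n => (j : ℕ) < k), (mu hP j - c) := by
      rw [← Finset.sum_filter_add_sum_filter_not univ (fun j : Fin n => (j : ℕ) < k)
        (fun j => max (mu hP j - c) 0)]
      have hzero : ∑ j ∈ univ.filter (fun j : Fin n => ¬ (j : ℕ) < k), max (mu hP j - c) 0 = 0 := by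
        apply Finset.sum_eq_zero
        intro j hj
        simp only [Finset.mem_filter, Finset.mem_univ, true_and, not_lt] at hj
        have hle : (⟨k, hklt⟩ : Fin n) ≤ j := by
          rw [Fin.le_def]
          exact hj
        have : mu hP j ≤ c := mu_antitone hP hle
        exact max_eq_right (sub_nonpos.mpr this)
      rw [hzero, add_zero]
      apply Finset.sum_congr rfl
      intro j hj
      simp only [Finset.mem_filter, Finset.mem_univ, true_and] at hj
      have hle : j ≤ (⟨k, hklt⟩ : Fin n) := by
        rw [Fin.le_def]
        exact le_of_lt hj
      have : c ≤ mu hP j := mu_antitone hP hle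
      exact max_eq_left (sub_nonneg.mpr this)
    have hcardF : (univ.filter (fun j : Fin n => (j : ℕ) < k)).card = k :=
      card_filter_lt k hkn
    have step6 : ∑ j ∈ univ.filter (fun j : Fin n => (j : ℕ) < k), (mu hP j - c)
        = (∑ j ∈ univ.filter (fun j : Fin n => (j : ℕ) < k), mu hP j) - k * c := by
      rw [Finset.sum_sub_distrib, Finset.sum_const, nsmul_eq_mul, hcardF]
    calc ∑ i ∈ I, (mu hBP i - mu hB i)
        ≤ (∑ i ∈ I, (mu hBQ i - mu hB i)) + k * c := step1
      _ ≤ (∑ i : Fin n, (mu hBQ i - mu hB i)) + k * c := by linarith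
      _ = (∑ j ∈ univ.filter (fun j : Fin n => (j : ℕ) < k), mu hP j) - k * c + k * c := by
          rw [step3, step4, step5, step6]
      _ = ∑ j ∈ univ.filter (fun j : Fin n => (j : ℕ) < k), mu hP j := by ring


/-- sum over any finset is at most the top-card sum of the sorted tuple -/
lemma sum_le_topk_sortD (f : Fin n → ℝ) (J : Finset (Fin n)) :
    ∑ i ∈ J, f i ≤ ∑ j ∈ univ.filter (fun j : Fin n => (j : ℕ) < J.card), sortD f j := by
  classical
  set σ := Tuple.sort (fun i => - f i) with hσ
  have hf : ∀ i, f i = sortD f (σ.symm i) := by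
    intro i
    simp [sortD, hσ]
  have h1 : ∑ i ∈ J, f i = ∑ i ∈ J.image σ.symm, sortD f i := by
    rw [Finset.sum_image (fun x _ y _ h => σ.symm.injective h)]
    exact Finset.sum_congr rfl fun i _ => hf i
  have h2 : (J.image σ.symm).card = J.card :=
    Finset.card_image_of_injective _ σ.symm.injective
  rw [h1, ← h2]
  exact sum_le_sum_topk (sortD_antitone f) _

end Lid

open Finset

/-- `μ` is the listing, in nonincreasing order, of the eigenvalues (with multiplicity)
of the Hermitian matrix `A`. -/
def IsEigListDesc {n : ℕ} (A : Matrix (Fin n) (Fin n) ℂ) (hA : A.IsHermitian)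
    (μ : Fin n → ℝ) : Prop :=
  Antitone μ ∧ ∃ σ : Equiv.Perm (Fin n), μ = hA.eigenvalues ∘ σ

/-- `|Λ(A) − Λ(B)| ≺_w S(A − B)` for Hermitian `A`, `B`. -/
theorem abs_eig_sub_weakMaj_sing {n : ℕ} (A B : Matrix (Fin n) (Fin n) ℂ)
    (hA : A.IsHermitian) (hB : B.IsHermitian)
    (a b sAB : Fin n → ℝ)
    (ha : IsEigListDesc A hA a) (hb : IsEigListDesc B hB b)
    (hsAB : IsSingListDesc (A - B) sAB) :
    WeakMajDesc (fun i => |a i - b i|) sAB := by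
  classical
  intro t
  obtain ⟨ha_anti, σa, haσ⟩ := ha
  obtain ⟨hb_anti, σb, hbσ⟩ := hb
  obtain ⟨hs_anti, σs, hsσ⟩ := hsAB
  set C := A - B with hCdef
  have hC : C.IsHermitian := hA.sub hB
  -- identify a, b with the canonical sorted eigenvalue lists
  have haeq : a = Lid.mu hA :=
    Lid.antitone_unique ha_anti (Lid.mu_antitone hA)
      ((haσ ▸ Lid.PermEq.of_comp σa hA.eigenvalues).trans (Lid.mu_permEq hA).symm)
  have hbeq : b = Lid.mu hB :=
    Lid.antitone_unique hb_anti (Lid.mu_antitone hB)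
      ((hbσ ▸ Lid.PermEq.of_comp σb hB.eigenvalues).trans (Lid.mu_permEq hB).symm)
  -- spectral data of C
  set U := (hC.eigenvectorUnitary : Matrix (Fin n) (Fin n) ℂ) with hUdef
  have hU := Lid.eigenvectorUnitary_mem hC
  set d := hC.eigenvalues with hd
  set Cp := Lid.UDU U (fun i => max (d i) 0) with hCpdef
  set Cm := Lid.UDU U (fun i => max (- d i) 0) with hCmdef
  have hCpC : C + Cm = Cp := by
    have hsp := Lid.spectral hC
    have hfun : (d + fun i => max (-(d i)) 0) = fun i => max (d i) 0 := by
      funext i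
      simp only [Pi.add_apply]
      rcases le_total (d i) 0 with h | h
      · rw [max_eq_left (neg_nonneg.mpr h), max_eq_right h]
        ring
      · rw [max_eq_right (neg_nonpos.mpr h), max_eq_left h]
        ring
    conv_lhs => rw [hsp]
    rw [hCmdef, Lid.UDU_add]
    exact congrArg (Lid.UDU U) hfun
  have hCpH : Cp.IsHermitian := Lid.herm_UDU _ _
  have hCmH : Cm.IsHermitian := Lid.herm_UDU _ _
  have hQp : ∀ v, 0 ≤ Lid.QF Cp v :=
    Lid.QF_UDU_nonneg hU (fun i => le_max_right _ _)
  have hQm : ∀ v, 0 ≤ Lid.QF Cm v :=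
    Lid.QF_UDU_nonneg hU (fun i => le_max_right _ _)
  have hDher : (B + Cp).IsHermitian := hB.add hCpH
  have hADher : (A + Cm).IsHermitian := hA.add hCmH
  have hDA : B + Cp = A + Cm := by
    rw [← hCpC, hCdef]
    abel
  -- pointwise monotonicity bounds
  have hDmuA : ∀ i, Lid.mu hA i ≤ Lid.mu hDher i := by
    intro i
    have := Lid.mu_le_mu_add hA hDher (c := 0) (fun v => by
      rw [hDA, Lid.QF_add]
      have := hQm v
      linarith) i
    simpa using this
  have hDmuB : ∀ i, Lid.mu hB i ≤ Lid.mu hADher i := by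
    intro i
    have := Lid.mu_le_mu_add hB hADher (c := 0) (fun v => by
      rw [← hDA, Lid.QF_add]
      have := hQp v
      linarith) i
    simpa using this
  -- split t according to sign
  set tp := t.filter (fun i => b i ≤ a i) with htp
  set tm := t.filter (fun i => ¬ b i ≤ a i) with htm
  have hsplit : ∑ i ∈ t, |a i - b i| = ∑ i ∈ tp, (a i - b i) + ∑ i ∈ tm, (b i - a i) := by
    rw [← Finset.sum_filter_add_sum_filter_not t (fun i => b i ≤ a i)
      (fun i => |a i - b i|)]
    congr 1
    · refine Finset.sum_congr rfl fun i hi => ?_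
      rw [htp, Finset.mem_filter] at hi
      exact abs_of_nonneg (sub_nonneg.mpr hi.2)
    · refine Finset.sum_congr rfl fun i hi => ?_
      rw [htm, Finset.mem_filter] at hi
      rw [abs_of_neg (sub_neg.mpr (lt_of_not_ge hi.2)), neg_sub]
  -- Lidskii (positive perturbation) applications
  have hLP1 := Lid.LP hB hCpH hQp hDher tp
  have hLP2 := Lid.LP hA hCmH hQm hADher tm
  have h1 : ∑ i ∈ tp, (a i - b i)
      ≤ ∑ j ∈ univ.filter (fun j : Fin n => (j : ℕ) < tp.card), Lid.mu hCpH j := by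
    refine le_trans (Finset.sum_le_sum fun i _ => ?_) hLP1
    rw [haeq, hbeq]
    have := hDmuA i
    linarith
  have h2 : ∑ i ∈ tm, (b i - a i)
      ≤ ∑ j ∈ univ.filter (fun j : Fin n => (j : ℕ) < tm.card), Lid.mu hCmH j := by
    refine le_trans (Finset.sum_le_sum fun i _ => ?_) hLP2
    rw [haeq, hbeq]
    have := hDmuB i
    linarith
  -- identify the eigenvalue lists of Cp and Cm
  have hmuCp : Lid.mu hCpH = fun j => max (Lid.mu hC j) 0 := by
    refine (Lid.eq_sortD_of_antitone ?_ ?_).symm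
    · intro i j hij
      exact max_le_max (Lid.mu_antitone hC hij) le_rfl
    · exact ((Lid.mu_permEq hC).map (fun x => max x 0)).trans
        (Lid.permEq_eigenvalues hCpH hU hCpdef)
  have hmuCm : Lid.mu hCmH = fun j => max (- Lid.mu hC (Fin.rev j)) 0 := by
    refine (Lid.eq_sortD_of_antitone ?_ ?_).symm
    · intro i j hij
      have h1 : Fin.rev j ≤ Fin.rev i := Fin.rev_le_rev.mpr hij
      have h2 : Lid.mu hC (Fin.rev i) ≤ Lid.mu hC (Fin.rev j) := Lid.mu_antitone hC h1
      exact max_le_max (neg_le_neg h2) le_rfl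
    · have hcomp : (fun j => max (- Lid.mu hC (Fin.rev j)) 0)
          = ((fun x => max (-x) 0) ∘ Lid.mu hC) ∘ (Fin.revPerm : Equiv.Perm (Fin n)) := rfl
      rw [hcomp]
      exact (Lid.PermEq.of_comp _ _).trans
        (((Lid.mu_permEq hC).map (fun x => max (-x) 0)).trans
          (Lid.permEq_eigenvalues hCmH hU hCmdef))
  -- bound by |mu hC|
  have h1' : ∑ j ∈ univ.filter (fun j : Fin n => (j : ℕ) < tp.card), Lid.mu hCpH j
      ≤ ∑ j ∈ univ.filter (fun j : Fin n => (j : ℕ) < tp.card), |Lid.mu hC j| := by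
    refine Finset.sum_le_sum fun j _ => ?_
    rw [hmuCp]
    exact max_le (le_abs_self _) (abs_nonneg _)
  have h2' : ∑ j ∈ univ.filter (fun j : Fin n => (j : ℕ) < tm.card), Lid.mu hCmH j
      ≤ ∑ j ∈ univ.filter (fun j : Fin n => (j : ℕ) < tm.card), |Lid.mu hC (Fin.rev j)| := by
    refine Finset.sum_le_sum fun j _ => ?_
    rw [hmuCm]
    exact max_le (neg_le_abs _) (abs_nonneg _)
  -- reindex the tm part through rev
  set F1 := univ.filter (fun j : Fin n => (j : ℕ) < tp.card) with hF1
  set F2 := univ.filter (fun j : Fin n => (j : ℕ) < tm.card) with hF2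
  set J2 := F2.image Fin.rev with hJ2
  have hreindex : ∑ j ∈ F2, |Lid.mu hC (Fin.rev j)| = ∑ i ∈ J2, |Lid.mu hC i| := by
    rw [hJ2, Finset.sum_image (fun x _ y _ h => Fin.rev_injective h)]
  -- cardinalities
  have hkt : tp.card + tm.card = t.card :=
    Finset.card_filter_add_card_filter_not (fun i => b i ≤ a i)
  have htn : t.card ≤ n := by simpa using Finset.card_le_univ t
  have hcardF1 : F1.card = tp.card := Lid.card_filter_lt _ (by omega)
  have hcardJ2 : J2.card = tm.card := by
    rw [hJ2, Finset.card_image_of_injective _ Fin.rev_injective, hF2,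
      Lid.card_filter_lt _ (by omega)]
  -- disjointness
  have hdisj : Disjoint F1 J2 := by
    rw [Finset.disjoint_left]
    intro x hx1 hx2
    rw [hF1, Finset.mem_filter] at hx1
    rw [hJ2, Finset.mem_image] at hx2
    obtain ⟨y, hy, rfl⟩ := hx2
    rw [hF2, Finset.mem_filter] at hy
    have hyv := Fin.val_rev y
    have hylt := y.isLt
    omega
  have hunion : ∑ j ∈ F1, |Lid.mu hC j| + ∑ i ∈ J2, |Lid.mu hC i|
      = ∑ i ∈ F1 ∪ J2, |Lid.mu hC i| := (Finset.sum_union hdisj).symm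
  have hcardU : (F1 ∪ J2).card = t.card := by
    rw [Finset.card_union_of_disjoint hdisj, hcardF1, hcardJ2, hkt]
  -- top-k bound
  have htopk : ∑ i ∈ F1 ∪ J2, |Lid.mu hC i|
      ≤ ∑ j ∈ univ.filter (fun j : Fin n => (j : ℕ) < t.card),
          Lid.sortD (fun i => |Lid.mu hC i|) j := by
    have := Lid.sum_le_topk_sortD (fun i => |Lid.mu hC i|) (F1 ∪ J2)
    rwa [hcardU] at this
  -- identify sAB
  have hCC : Cᴴ * C = Lid.UDU U (fun i => d i ^ 2) := by
    have hconj : Cᴴ = C := hC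
    rw [hconj]
    have hmul := congrArg (fun M => M * M) (Lid.spectral hC)
    rw [hmul]
    unfold Lid.UDU
    rw [show (U * diagonal (fun i => ((d i : ℝ) : ℂ)) * Uᴴ) *
        (U * diagonal (fun i => ((d i : ℝ) : ℂ)) * Uᴴ)
      = U * (diagonal (fun i => ((d i : ℝ) : ℂ)) * (Uᴴ * U) *
        diagonal (fun i => ((d i : ℝ) : ℂ))) * Uᴴ by simp only [mul_assoc]]
    rw [Lid.star_mul_U hU, mul_one, diagonal_mul_diagonal]
    congr 2
    funext i
    push_cast
    ring
  have hsabeq : sAB = Lid.sortD (fun i => |Lid.mu hC i|) := by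
    refine Lid.eq_sortD_of_antitone hs_anti ?_
    have hp1 : Lid.PermEq sAB
        ((fun i => Real.sqrt ((Matrix.isHermitian_conjTranspose_mul_self C).eigenvalues i))) :=
      hsσ ▸ Lid.PermEq.of_comp σs _
    have hp2 : Lid.PermEq (fun i => d i ^ 2)
        ((Matrix.isHermitian_conjTranspose_mul_self C).eigenvalues) :=
      Lid.permEq_eigenvalues _ hU hCC
    have hp3 := hp2.map Real.sqrt
    have habs : Real.sqrt ∘ (fun i => d i ^ 2) = fun i => |d i| := by
      funext i
      exact Real.sqrt_sq_eq_abs _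
    rw [habs] at hp3
    have hp4 : Lid.PermEq (fun i => |Lid.mu hC i|) (fun i => |d i|) :=
      (Lid.mu_permEq hC).map (fun x => |x|)
    exact (hp1.trans hp3.symm).trans hp4.symm
  -- finish
  calc ∑ i ∈ t, |a i - b i| = ∑ i ∈ tp, (a i - b i) + ∑ i ∈ tm, (b i - a i) := hsplit
    _ ≤ (∑ j ∈ F1, Lid.mu hCpH j) + ∑ j ∈ F2, Lid.mu hCmH j := by
        exact add_le_add h1 h2
    _ ≤ (∑ j ∈ F1, |Lid.mu hC j|) + ∑ j ∈ F2, |Lid.mu hC (Fin.rev j)| := add_le_add h1' h2'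
    _ = (∑ j ∈ F1, |Lid.mu hC j|) + ∑ i ∈ J2, |Lid.mu hC i| := by rw [hreindex]
    _ = ∑ i ∈ F1 ∪ J2, |Lid.mu hC i| := hunion
    _ ≤ ∑ j ∈ univ.filter (fun j : Fin n => (j : ℕ) < t.card),
          Lid.sortD (fun i => |Lid.mu hC i|) j := htopk
    _ = ∑ j ∈ univ.filter (fun j : Fin n => (j : ℕ) < t.card), sAB j := by rw [hsabeq]
end

section
/- Pinching inequality: Let P be an orthogonal projector and A any linear operator on a finite-dimensional inner product space. Then S(PAP + (I−P)A(I−P)) ≺_w S(A) and S(PAP − (I−P)A(I−P)) ≺_w S(A). -/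
open Finset

open Matrix

noncomputable section
namespace Pinch

variable {α β : Type*} [Fintype α] [Fintype β]

/-- squared ℓ² norm of a complex vector -/
def nsq (v : α → ℂ) : ℝ := ∑ i, Complex.normSq (v i)

lemma nsq_nonneg (v : α → ℂ) : 0 ≤ nsq v :=
  Finset.sum_nonneg fun i _ => Complex.normSq_nonneg _

lemma star_dot_self (v : α → ℂ) : dotProduct (star v) v = (nsq v : ℂ) := by
  simp only [dotProduct, Pi.star_apply, nsq, Complex.ofReal_sum]
  exact Finset.sum_congr rfl fun i _ => by
    rw [RCLike.star_def, ← Complex.normSq_eq_conj_mul_self]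

lemma nsq_conj (v : α → ℂ) : nsq (fun i => (starRingEnd ℂ) (v i)) = nsq v := by
  simp [nsq]

/-- Cauchy–Schwarz for the complex dot product. -/
lemma re_dot_le (v w : α → ℂ) :
    (dotProduct (star v) w).re ≤ Real.sqrt (nsq v) * Real.sqrt (nsq w) := by
  have h1 : (dotProduct (star v) w).re ≤ ‖dotProduct (star v) w‖ :=
    Complex.re_le_norm _
  refine h1.trans ?_
  have h2 : ‖dotProduct (star v) w‖ ≤ ∑ i, ‖v i‖ * ‖w i‖ := by
    refine (norm_sum_le _ _).trans ?_
    refine Finset.sum_le_sum fun i _ => ?_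
    simp [Pi.star_apply, norm_mul]
  refine h2.trans ?_
  have := Real.sum_mul_le_sqrt_mul_sqrt (Finset.univ (α := α)) (fun i => ‖v i‖) (fun i => ‖w i‖)
  refine this.trans (le_of_eq ?_)
  rw [show nsq v = ∑ i, ‖v i‖^2 from Finset.sum_congr rfl fun i _ => (Complex.sq_norm _).symm,
     show nsq w = ∑ i, ‖w i‖^2 from Finset.sum_congr rfl fun i _ => (Complex.sq_norm _).symm]

lemma dot_adjoint (A : Matrix α β ℂ) (u : β → ℂ) (x : α → ℂ) :
    dotProduct (star (A *ᵥ u)) x = dotProduct (star u) (Aᴴ *ᵥ x) := by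
  rw [Matrix.star_mulVec, ← dotProduct_mulVec]

/-- Bessel/contraction: if the columns of `W` are orthonormal then `‖Wᴴ u‖² ≤ ‖u‖²`. -/
lemma nsq_conjTranspose_mulVec_le [DecidableEq β] (W : Matrix α β ℂ) (hW : Wᴴ * W = 1) (u : α → ℂ) :
    nsq (Wᴴ *ᵥ u) ≤ nsq u := by
  classical
  set Q : Matrix α α ℂ := W * Wᴴ with hQ
  have hQH : Qᴴ = Q := by simp [hQ, conjTranspose_mul, Matrix.mul_assoc]
  have hQQ : Q * Q = Q := by
    rw [hQ, Matrix.mul_assoc, ← Matrix.mul_assoc Wᴴ W Wᴴ, hW, Matrix.one_mul]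
  have key : dotProduct (star (Wᴴ *ᵥ u)) (Wᴴ *ᵥ u)
      = dotProduct (star u) (Q *ᵥ u) := by
    rw [dot_adjoint, conjTranspose_conjTranspose, Matrix.mulVec_mulVec]
  have key2 : dotProduct (star (Q *ᵥ u)) (Q *ᵥ u)
      = dotProduct (star u) (Q *ᵥ u) := by
    rw [dot_adjoint, hQH, Matrix.mulVec_mulVec, hQQ]
  have key3 : dotProduct (star (Q *ᵥ u)) u
      = dotProduct (star u) (Q *ᵥ u) := by
    rw [dot_adjoint, hQH]
  have e1 : nsq (Wᴴ *ᵥ u) = nsq (Q *ᵥ u) := by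
    have := (star_dot_self (Wᴴ *ᵥ u)).symm.trans (key.trans (key2.symm.trans (star_dot_self (Q *ᵥ u))))
    exact_mod_cast congrArg Complex.re this
  have cs := re_dot_le (Q *ᵥ u) u
  have e2 : (dotProduct (star (Q *ᵥ u)) u).re = nsq (Q *ᵥ u) := by
    rw [key3, ← key2, star_dot_self]; exact Complex.ofReal_re _
  rw [e1]
  rw [e2] at cs
  nlinarith [Real.sq_sqrt (nsq_nonneg (Q *ᵥ u)), Real.sq_sqrt (nsq_nonneg u),
    Real.sqrt_nonneg (nsq (Q *ᵥ u)), Real.sqrt_nonneg (nsq u), nsq_nonneg (Q *ᵥ u),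
    sq_nonneg (Real.sqrt (nsq (Q *ᵥ u)) - Real.sqrt (nsq u))]

variable {n : ℕ}

/-- sum of the first `k` entries. -/
def topsum (s : Fin n → ℝ) (k : ℕ) : ℝ :=
  ∑ i ∈ Finset.univ.filter (fun j : Fin n => (j : ℕ) < k), s i

lemma topsum_mono {s : Fin n → ℝ} (hs : ∀ i, 0 ≤ s i) {k l : ℕ} (h : k ≤ l) :
    topsum s k ≤ topsum s l := by
  refine Finset.sum_le_sum_of_subset_of_nonneg ?_ (fun i _ _ => hs i)
  intro i hi
  simp only [Finset.mem_filter] at hi ⊢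
  exact ⟨hi.1, lt_of_lt_of_le hi.2 h⟩

lemma card_filter_lt_le (k : ℕ) :
    (Finset.univ.filter (fun j : Fin n => (j : ℕ) < k)).card ≤ k := by
  classical
  have h2 : (Finset.univ.filter (fun j : Fin n => (j : ℕ) < k)).card ≤ (Finset.range k).card := by
    refine Finset.card_le_card_of_injOn (fun j : Fin n => (j : ℕ)) ?_ (Fin.val_injective.injOn)
    intro j hj
    exact Finset.mem_range.2 (by simpa using (Finset.mem_filter.1 hj).2)
  simpa using h2

/-- key rearrangement bound: `∑ s i * c i ≤ topsum s k` for `0 ≤ c ≤ 1`, `∑ c ≤ k`. -/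
lemma abel_bound (s c : Fin n → ℝ) (hs : Antitone s) (hs0 : ∀ i, 0 ≤ s i)
    (hc0 : ∀ i, 0 ≤ c i) (hc1 : ∀ i, c i ≤ 1) {k : ℕ} (hck : ∑ i, c i ≤ k) :
    ∑ i, s i * c i ≤ topsum s k := by
  classical
  rcases le_or_gt n k with hnk | hkn
  · have hfilt : Finset.univ.filter (fun j : Fin n => (j : ℕ) < k) = Finset.univ := by
      refine Finset.filter_true_of_mem fun i _ => lt_of_lt_of_le i.isLt hnk
    rw [topsum, hfilt]
    exact Finset.sum_le_sum fun i _ => by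
      simpa using mul_le_mul_of_nonneg_left (hc1 i) (hs0 i)
  · set τ := s ⟨k, hkn⟩ with hτ
    set F := Finset.univ.filter (fun j : Fin n => (j : ℕ) < k) with hF
    have hcardF : F.card = k := by
      have : F = Finset.Iio (⟨k, hkn⟩ : Fin n) := by
        ext j; simp [hF, Fin.lt_def]
      rw [this, Fin.card_Iio]
    have pointwise : ∀ i, s i * c i ≤ (if i ∈ F then s i else 0) + τ * c i
        - (if i ∈ F then τ else 0) := by
      intro i
      by_cases hi : i ∈ F
      · simp only [hi, if_pos]
        have hsi : τ ≤ s i := by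
          refine hs ?_
          have : (i : ℕ) < k := by simpa [hF] using (Finset.mem_filter.1 hi).2
          exact Fin.le_def.2 (le_of_lt this)
        nlinarith [hc1 i, hc0 i]
      · simp only [hi, if_neg, not_false_iff]
        have hsi : s i ≤ τ := by
          refine hs ?_
          have : ¬ (i : ℕ) < k := by
            intro h; exact hi (Finset.mem_filter.2 ⟨Finset.mem_univ _, h⟩)
          exact Fin.le_def.2 (le_of_not_gt this)
        nlinarith [hc0 i]
    calc ∑ i, s i * c i
        ≤ ∑ i, ((if i ∈ F then s i else 0) + τ * c i - (if i ∈ F then τ else 0)) :=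
          Finset.sum_le_sum fun i _ => pointwise i
      _ = topsum s k + τ * (∑ i, c i) - τ * k := by
          rw [Finset.sum_sub_distrib, Finset.sum_add_distrib, ← Finset.mul_sum]
          congr 2
          · rw [Finset.sum_ite_mem, Finset.univ_inter, topsum, hF]
          · rw [Finset.sum_ite_mem, Finset.univ_inter, Finset.sum_const, hcardF,
              nsmul_eq_mul, mul_comm]
      _ ≤ topsum s k := by
          have h0τ : 0 ≤ τ := hs0 _
          nlinarith [hck]

lemma strictMono_fin_le {k : ℕ} (g : Fin k → ℕ) (hg : StrictMono g) : ∀ j : Fin k, (j : ℕ) ≤ g j := by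
  have key : ∀ m : ℕ, ∀ hm : m < k, m ≤ g ⟨m, hm⟩ := by
    intro m
    induction m with
    | zero => intro hm; exact Nat.zero_le _
    | succ p ih =>
        intro hm
        have hp : p < k := Nat.lt_of_succ_lt hm
        have h1 : g ⟨p, hp⟩ < g ⟨p + 1, hm⟩ := hg (by simp [Fin.lt_def])
        have h2 := ih hp
        omega
  intro j
  have := key j.1 j.2
  simpa using this

lemma sum_le_topsum (f : Fin n → ℝ) (hf : Antitone f) (t : Finset (Fin n)) :
    ∑ i ∈ t, f i ≤ topsum f t.card := by
  classical
  set k := t.card with hk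
  have hkn : k ≤ n := by
    rw [hk]
    simpa using Finset.card_le_univ t
  have e := t.orderIsoOfFin hk.symm
  have hmono : StrictMono (fun j : Fin k => (((e j : Fin n)) : ℕ)) := by
    intro a b hab
    have : (e a : Fin n) < (e b : Fin n) := e.strictMono hab
    exact this
  have hstep : ∀ j : Fin k, f ((e j : Fin n)) ≤ f (Fin.castLE hkn j) := by
    intro j
    refine hf ?_
    have := strictMono_fin_le _ hmono j
    exact Fin.le_def.2 (by simpa using this)
  have e1 : ∑ i ∈ t, f i = ∑ j : Fin k, f ((e j : Fin n)) := by
    rw [← Finset.sum_attach t (fun i => f i)]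
    exact (Equiv.sum_comp e.toEquiv (fun i => f (i : Fin n))).symm
  have e2 : ∑ j : Fin k, f (Fin.castLE hkn j) = topsum f k := by
    rw [topsum]
    refine Finset.sum_bij (fun (j : Fin k) _ => Fin.castLE hkn j) ?_ ?_ ?_ ?_
    · intro a _
      simp only [Finset.mem_filter, Finset.mem_univ, true_and]
      simpa using a.isLt
    · intro a _ b _ hab
      simpa [Fin.ext_iff] using hab
    · intro b hb
      have hbk : (b : ℕ) < k := by simpa using (Finset.mem_filter.1 hb).2
      exact ⟨⟨(b : ℕ), hbk⟩, Finset.mem_univ _, by simp [Fin.ext_iff]⟩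
    · intro a _; rfl
  calc ∑ i ∈ t, f i = ∑ j : Fin k, f ((e j : Fin n)) := e1
    _ ≤ ∑ j : Fin k, f (Fin.castLE hkn j) := Finset.sum_le_sum fun j _ => hstep j
    _ = topsum f k := e2

lemma mulVec_col {γ : Type*} [Fintype γ] (A : Matrix α β ℂ) (B : Matrix β γ ℂ) (i : γ) :
    A *ᵥ (fun l => B l i) = fun l => (A * B) l i := by
  funext l
  simp [Matrix.mulVec, Matrix.mul_apply, dotProduct]

lemma conj_mul_entry {γ : Type*} [Fintype γ] (A : Matrix α β ℂ) (B : Matrix α γ ℂ) (i : β) (j : γ) :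
    (starRingEnd ℂ) ((Aᴴ * B) i j) = (Bᴴ * A) j i := by
  simp [Matrix.mul_apply, Matrix.conjTranspose_apply, map_sum, mul_comm]

lemma sum_nsq_swap (C : Matrix α β ℂ) :
    ∑ i : β, nsq (fun l => C l i) = ∑ l : α, nsq (fun i => C l i) := by
  simp only [nsq]
  exact Finset.sum_comm

lemma nsq_real_smul (r : ℝ) (w : α → ℂ) :
    nsq (fun j => (r : ℂ) * w j) = r ^ 2 * nsq w := by
  simp [nsq, Complex.normSq_mul, Finset.mul_sum, Complex.normSq_ofReal, sq]

lemma nsq_col_one [DecidableEq β] {W : Matrix α β ℂ} (hW : Wᴴ * W = 1) (j : β) :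
    nsq (fun l => W l j) = 1 := by
  have h1 : dotProduct (star (fun l => W l j)) (fun l => W l j) = (Wᴴ * W) j j := by
    simp [Matrix.mul_apply, dotProduct, Matrix.conjTranspose_apply]
  rw [star_dot_self, hW, Matrix.one_apply_eq] at h1
  simpa using congrArg Complex.re h1

/-- Ky Fan-type upper bound: for isometries `U V` with `card ι` columns,
`Re tr (Uᴴ M V) ≤ ∑ top (card ι) singular values of M`. -/
lemma kyfan_upper {n : ℕ} (M : Matrix (Fin n) (Fin n) ℂ) {s : Fin n → ℝ}
    (hs : IsSingListDesc M s) {ι : Type} [Fintype ι] [DecidableEq ι]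
    (U V : Matrix (Fin n) ι ℂ) (hU : Uᴴ * U = 1) (hV : Vᴴ * V = 1) :
    (Matrix.trace (Uᴴ * M * V)).re ≤ topsum s (Fintype.card ι) := by
  classical
  obtain ⟨hanti, σ, hσ⟩ := hs
  set h : (Mᴴ * M).IsHermitian := Matrix.isHermitian_conjTranspose_mul_self M with hh
  set lam : Fin n → ℝ := h.eigenvalues with hlam
  set Y : Matrix (Fin n) (Fin n) ℂ := (Matrix.IsHermitian.eigenvectorUnitary h : Matrix (Fin n) (Fin n) ℂ) with hY
  have hYmem := (Matrix.IsHermitian.eigenvectorUnitary h).2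
  have hY1 : Yᴴ * Y = 1 := by
    rw [← Matrix.star_eq_conjTranspose]
    exact (Matrix.mem_unitaryGroup_iff'.1 hYmem)
  have hY2 : Y * Yᴴ = 1 := by
    rw [← Matrix.star_eq_conjTranspose]
    exact (Matrix.mem_unitaryGroup_iff.1 hYmem)
  have hlam0 : ∀ i, 0 ≤ lam i := fun i => Matrix.eigenvalues_conjTranspose_mul_self_nonneg M i
  have hs0 : ∀ i, 0 ≤ s i := by
    intro i; rw [hσ]; exact Real.sqrt_nonneg _
  have hsval : ∀ j, s j = Real.sqrt (lam (σ j)) := fun j => by rw [hσ]; rfl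
  have hspec : Mᴴ * M * Y = Y * Matrix.diagonal (RCLike.ofReal ∘ lam) := by
    conv_lhs => rw [h.spectral_theorem, Unitary.conjStarAlgAut_apply]
    rw [Matrix.mul_assoc, Matrix.mul_assoc]
    rw [show (star (h.eigenvectorUnitary : Matrix (Fin n) (Fin n) ℂ)) * Y = 1 from
      Matrix.mem_unitaryGroup_iff'.1 hYmem, Matrix.mul_one]
  set ycol : Fin n → Fin n → ℂ := fun i l => Y l i with hycol
  set mcol : Fin n → Fin n → ℂ := fun i l => (M * Y) l i with hmcol
  have hmcol' : ∀ i, mcol i = M *ᵥ ycol i := fun i => (mulVec_col M Y i).symm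
  have coldot : ∀ i j, dotProduct (star (ycol i)) (ycol j) = if i = j then 1 else 0 := by
    intro i j
    have : dotProduct (star (ycol i)) (ycol j) = (Yᴴ * Y) i j := by
      simp [Matrix.mul_apply, dotProduct, Matrix.conjTranspose_apply, hycol]
    rw [this, hY1, Matrix.one_apply]
  have keydot : ∀ i j, dotProduct (star (mcol i)) (mcol j)
      = if i = j then ((lam j : ℝ) : ℂ) else 0 := by
    intro i j
    rw [hmcol' i, hmcol' j, dot_adjoint, Matrix.mulVec_mulVec]
    rw [show (Mᴴ * M) *ᵥ ycol j = fun l => ((Mᴴ * M) * Y) l j from mulVec_col _ _ j, hspec]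
    have e : (fun l => (Y * Matrix.diagonal (RCLike.ofReal ∘ lam) : Matrix (Fin n) (Fin n) ℂ) l j)
        = fun l => ((lam j : ℝ) : ℂ) * ycol j l := by
      funext l
      simp [Matrix.mul_diagonal, hycol, mul_comm, RCLike.ofReal]
    rw [e]
    have e2 : dotProduct (star (ycol i)) (fun l => ((lam j : ℝ) : ℂ) * ycol j l)
        = ((lam j : ℝ) : ℂ) * dotProduct (star (ycol i)) (ycol j) := by
      simp [dotProduct, Finset.mul_sum]; ring_nf
      exact Finset.sum_congr rfl fun l _ => by ring
    rw [e2, coldot i j]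
    by_cases hij : i = j <;> simp [hij]
  set bb : Fin n → ι → ℂ := fun i j => (Vᴴ * Y) j i with hbb
  set gg : Fin n → ι → ℂ := fun i j => (Uᴴ * (M * Y)) j i with hgg
  have hbv : ∀ i, bb i = Vᴴ *ᵥ ycol i := fun i => by
    rw [hbb]; exact (mulVec_col Vᴴ Y i).symm
  have hgv : ∀ i, gg i = Uᴴ *ᵥ mcol i := fun i => by
    rw [hgg, hmcol]; exact (mulVec_col Uᴴ (M * Y) i).symm
  -- trace identity
  have htr : Matrix.trace (Uᴴ * M * V) = ∑ i, dotProduct (star (bb i)) (gg i) := by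
    have t1 : Matrix.trace (Uᴴ * M * V) = Matrix.trace ((Yᴴ * V) * (Uᴴ * (M * Y))) := by
      have e0 : V * (Uᴴ * M) = ((V * (Uᴴ * M)) * Y) * Yᴴ := by
        rw [Matrix.mul_assoc (V * (Uᴴ * M)) Y Yᴴ, hY2, Matrix.mul_one]
      rw [Matrix.trace_mul_comm (Uᴴ * M) V, e0, Matrix.trace_mul_comm _ Yᴴ]
      congr 1
      simp only [Matrix.mul_assoc]
    rw [t1]
    rw [Matrix.trace]
    refine Finset.sum_congr rfl fun i _ => ?_
    rw [Matrix.diag, Matrix.mul_apply, dotProduct]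
    refine Finset.sum_congr rfl fun j _ => ?_
    congr 1
    have := conj_mul_entry V Y (i := j) (j := i)
    simp only [Pi.star_apply, hbb]
    rw [← this]
    rfl
  -- basic size facts
  have hnsqy : ∀ i, nsq (ycol i) = 1 := fun i => nsq_col_one hY1 i
  have hnsqm : ∀ i, nsq (mcol i) = lam i := by
    intro i
    have := keydot i i
    rw [star_dot_self, if_pos rfl] at this
    exact_mod_cast congrArg Complex.re this
  have hble : ∀ i, nsq (bb i) ≤ 1 := by
    intro i
    rw [hbv i]
    exact (nsq_conjTranspose_mulVec_le V hV (ycol i)).trans_eq (hnsqy i)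
  have hgle : ∀ i, nsq (gg i) ≤ lam i := by
    intro i
    rw [hgv i]
    exact (nsq_conjTranspose_mulVec_le U hU (mcol i)).trans_eq (hnsqm i)
  -- the coefficients
  set c : Fin n → ℝ := fun i => if lam i = 0 then 0 else
    Real.sqrt (nsq (bb i)) * Real.sqrt (nsq (gg i)) / Real.sqrt (lam i) with hc
  have hterm : ∀ i, (dotProduct (star (bb i)) (gg i)).re ≤ Real.sqrt (lam i) * c i := by
    intro i
    by_cases hl : lam i = 0
    · have hg0 : nsq (gg i) = 0 := le_antisymm ((hgle i).trans_eq hl) (nsq_nonneg _)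
      have h2 := re_dot_le (bb i) (gg i)
      rw [hg0, Real.sqrt_zero, mul_zero] at h2
      simp only [hc]
      rw [if_pos hl, mul_zero]
      exact h2
    · have hlpos : 0 < lam i := lt_of_le_of_ne (hlam0 i) (Ne.symm hl)
      have hsq : Real.sqrt (lam i) ≠ 0 := by positivity
      simp only [hc]
      rw [if_neg hl, mul_div_assoc']
      rw [mul_comm (Real.sqrt (lam i)), mul_div_assoc, div_self hsq, mul_one]
      exact re_dot_le _ _
  have hc0 : ∀ i, 0 ≤ c i := by
    intro i
    simp only [hc]
    split
    · exact le_refl 0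
    · positivity
  have hc1 : ∀ i, c i ≤ 1 := by
    intro i
    simp only [hc]
    split
    · exact zero_le_one
    · rename_i hl
      have hlpos : 0 < lam i := lt_of_le_of_ne (hlam0 i) (Ne.symm hl)
      have h1 : Real.sqrt (nsq (bb i)) ≤ 1 := by
        rw [show (1:ℝ) = Real.sqrt 1 from (Real.sqrt_one).symm]
        exact Real.sqrt_le_sqrt (hble i)
      have h2 : Real.sqrt (nsq (gg i)) ≤ Real.sqrt (lam i) := Real.sqrt_le_sqrt (hgle i)
      rw [div_le_one (by positivity)]
      calc Real.sqrt (nsq (bb i)) * Real.sqrt (nsq (gg i))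
          ≤ 1 * Real.sqrt (lam i) := by
            exact mul_le_mul h1 h2 (Real.sqrt_nonneg _) zero_le_one
        _ = Real.sqrt (lam i) := one_mul _
  -- ∑ nsq (bb i) ≤ card ι
  have hsumb : ∑ i, nsq (bb i) ≤ (Fintype.card ι : ℝ) := by
    have swap : ∑ i, nsq (bb i) = ∑ j : ι, nsq (fun i => (Vᴴ * Y) j i) := by
      have : ∀ i, nsq (bb i) = nsq (fun j => (Vᴴ * Y) j i) := fun i => rfl
      simp only [this]
      exact sum_nsq_swap (Vᴴ * Y)
    rw [swap]
    have hrow : ∀ j : ι, nsq (fun i => (Vᴴ * Y) j i) ≤ 1 := by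
      intro j
      have e1 : (fun i => (Vᴴ * Y) j i) = fun i => (starRingEnd ℂ) ((Yᴴ * V) i j) := by
        funext i
        rw [conj_mul_entry Y V (i := i) (j := j)]
      have e2 : nsq (fun i => (Vᴴ * Y) j i) = nsq (fun i => (Yᴴ * V) i j) := by
        rw [e1, nsq_conj]
      rw [e2]
      have e3 : (fun i => (Yᴴ * V) i j) = Yᴴ *ᵥ (fun l => V l j) := (mulVec_col Yᴴ V j).symm
      rw [e3]
      exact (nsq_conjTranspose_mulVec_le Y hY1 _).trans_eq (nsq_col_one hV j)
    calc ∑ j : ι, nsq (fun i => (Vᴴ * Y) j i) ≤ ∑ _j : ι, (1:ℝ) :=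
          Finset.sum_le_sum fun j _ => hrow j
      _ = (Fintype.card ι : ℝ) := by simp
  -- Bessel: ∑ D ≤ card ι
  set D : Fin n → ℝ := fun i => if lam i = 0 then 0 else nsq (gg i) / lam i with hD
  have hsumD : ∑ i, D i ≤ (Fintype.card ι : ℝ) := by
    set X : Matrix (Fin n) {p : Fin n // lam p ≠ 0} ℂ :=
      fun l p => ((Real.sqrt (lam p.1) : ℝ) : ℂ)⁻¹ * mcol p.1 l with hX
    have hXcol : ∀ p : {p : Fin n // lam p ≠ 0},
        (fun l => X l p) = fun l => ((Real.sqrt (lam p.1) : ℝ) : ℂ)⁻¹ * mcol p.1 l := fun p => rfl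
    have hXX : Xᴴ * X = 1 := by
      ext p q
      have hdot : (Xᴴ * X) p q = star (((Real.sqrt (lam p.1) : ℝ) : ℂ)⁻¹) *
          (((Real.sqrt (lam q.1) : ℝ) : ℂ)⁻¹ * dotProduct (star (mcol p.1)) (mcol q.1)) := by
        simp only [Matrix.mul_apply, Matrix.conjTranspose_apply]
        simp only [Matrix.mul_apply, Matrix.conjTranspose_apply, hX, dotProduct,
          Pi.star_apply, star_mul', Finset.mul_sum]
        refine Finset.sum_congr rfl fun l _ => by ring
      rw [hdot, keydot]
      by_cases hpq : p = q
      · subst hpq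
        rw [if_pos rfl]
        have hlpos : 0 < lam p.1 := lt_of_le_of_ne (hlam0 p.1) (Ne.symm p.2)
        rw [Matrix.one_apply_eq]
        have : star (((Real.sqrt (lam p.1) : ℝ) : ℂ)⁻¹) = ((Real.sqrt (lam p.1) : ℝ) : ℂ)⁻¹ := by
          rw [← Complex.ofReal_inv, Complex.star_def, Complex.conj_ofReal]
        rw [this, ← Complex.ofReal_inv, ← Complex.ofReal_mul, ← Complex.ofReal_mul]
        rw [show (Real.sqrt (lam p.1))⁻¹ * ((Real.sqrt (lam p.1))⁻¹ * lam p.1) = 1 by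
          rw [← mul_assoc, ← mul_inv, Real.mul_self_sqrt hlpos.le, inv_mul_cancel₀ (ne_of_gt hlpos)]]
        simp
      · have : p.1 ≠ q.1 := fun hh' => hpq (Subtype.ext hh')
        rw [if_neg this, Matrix.one_apply_ne hpq]
        simp
    have hDval : ∀ p : {p : Fin n // lam p ≠ 0}, D p.1 = nsq (Uᴴ *ᵥ (fun l => X l p)) := by
      intro p
      have hlpos : 0 < lam p.1 := lt_of_le_of_ne (hlam0 p.1) (Ne.symm p.2)
      rw [hD]
      simp only [p.2, if_neg, not_false_iff]
      have e1 : Uᴴ *ᵥ (fun l => X l p) = fun j => ((Real.sqrt (lam p.1) : ℝ) : ℂ)⁻¹ * (gg p.1 j) := by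
        funext j
        rw [hgv p.1]
        simp only [Matrix.mulVec, dotProduct, hX, Finset.mul_sum]
        refine Finset.sum_congr rfl fun l _ => by ring
      rw [e1]
      have e2 : nsq (fun j => (((Real.sqrt (lam p.1))⁻¹ : ℝ) : ℂ) * (gg p.1 j))
          = ((Real.sqrt (lam p.1))⁻¹) ^ 2 * nsq (gg p.1) := nsq_real_smul _ _
      rw [show (((Real.sqrt (lam p.1) : ℝ) : ℂ)⁻¹) = ((((Real.sqrt (lam p.1))⁻¹ : ℝ)) : ℂ) by
        rw [Complex.ofReal_inv]] at *
      rw [e2]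
      rw [inv_pow, Real.sq_sqrt hlpos.le]
      rw [div_eq_inv_mul]
    -- reduce the sum over all i to the sum over the subtype
    have hred : ∑ i, D i = ∑ p : {p : Fin n // lam p ≠ 0}, D p.1 := by
      rw [← Finset.sum_subtype (Finset.univ.filter (fun i => lam i ≠ 0))
        (fun i => by simp) D]
      refine (Finset.sum_filter_of_ne ?_).symm
      intro x _ hx
      intro hl
      exact hx (by simp only [hD]; rw [if_pos hl])
    rw [hred]
    have swap2 : ∑ p : {p : Fin n // lam p ≠ 0}, D p.1
        = ∑ j : ι, nsq (fun p : {p : Fin n // lam p ≠ 0} => (Uᴴ * X) j p) := by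
      have e : ∀ p : {p : Fin n // lam p ≠ 0}, D p.1 = nsq (fun j => (Uᴴ * X) j p) := by
        intro p
        rw [hDval p, show (fun j => (Uᴴ * X) j p) = Uᴴ *ᵥ (fun l => X l p) from
          (mulVec_col Uᴴ X p).symm]
      simp only [e]
      exact sum_nsq_swap (Uᴴ * X)
    rw [swap2]
    have hrow2 : ∀ j : ι, nsq (fun p : {p : Fin n // lam p ≠ 0} => (Uᴴ * X) j p) ≤ 1 := by
      intro j
      have e1 : (fun p : {p : Fin n // lam p ≠ 0} => (Uᴴ * X) j p)
          = fun p => (starRingEnd ℂ) ((Xᴴ * U) p j) := by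
        funext p
        rw [conj_mul_entry X U (i := p) (j := j)]
      rw [e1, nsq_conj]
      rw [show (fun p : {p : Fin n // lam p ≠ 0} => (Xᴴ * U) p j) = Xᴴ *ᵥ (fun l => U l j) from
        (mulVec_col Xᴴ U j).symm]
      exact (nsq_conjTranspose_mulVec_le X hXX _).trans_eq (nsq_col_one hU j)
    calc ∑ j : ι, nsq (fun p : {p : Fin n // lam p ≠ 0} => (Uᴴ * X) j p) ≤ ∑ _j : ι, (1:ℝ) :=
          Finset.sum_le_sum fun j _ => hrow2 j
      _ = (Fintype.card ι : ℝ) := by simp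
  -- ∑ c ≤ card ι
  have hsumc : ∑ i, c i ≤ (Fintype.card ι : ℝ) := by
    have hpt : ∀ i, c i ≤ (nsq (bb i) + D i) / 2 := by
      intro i
      by_cases hl : lam i = 0
      · simp only [hc, hD]
        rw [if_pos hl, if_pos hl]
        have := nsq_nonneg (bb i)
        linarith
      · simp only [hc, hD]
        rw [if_neg hl, if_neg hl]
        have hlpos : 0 < lam i := lt_of_le_of_ne (hlam0 i) (Ne.symm hl)
        have e1 : Real.sqrt (nsq (bb i)) * Real.sqrt (nsq (gg i)) / Real.sqrt (lam i)
            = Real.sqrt (nsq (bb i)) * Real.sqrt (nsq (gg i) / lam i) := by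
          rw [Real.sqrt_div (nsq_nonneg _) _, mul_div_assoc]
        rw [e1]
        have hx := Real.sqrt_nonneg (nsq (bb i))
        have hy := Real.sqrt_nonneg (nsq (gg i) / lam i)
        have hx2 : Real.sqrt (nsq (bb i)) ^ 2 = nsq (bb i) := Real.sq_sqrt (nsq_nonneg _)
        have hy2 : Real.sqrt (nsq (gg i) / lam i) ^ 2 = nsq (gg i) / lam i :=
          Real.sq_sqrt (div_nonneg (nsq_nonneg _) (hlam0 i))
        nlinarith [sq_nonneg (Real.sqrt (nsq (bb i)) - Real.sqrt (nsq (gg i) / lam i))]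
    calc ∑ i, c i ≤ ∑ i, (nsq (bb i) + D i) / 2 := Finset.sum_le_sum fun i _ => hpt i
      _ = ((∑ i, nsq (bb i)) + ∑ i, D i) / 2 := by
          rw [← Finset.sum_add_distrib, ← Finset.sum_div]
      _ ≤ ((Fintype.card ι : ℝ) + (Fintype.card ι : ℝ)) / 2 := by
          linarith [hsumb, hsumD]
      _ = (Fintype.card ι : ℝ) := by ring
  -- conclude
  rw [htr, Complex.re_sum]
  calc ∑ i, (dotProduct (star (bb i)) (gg i)).re
      ≤ ∑ i, Real.sqrt (lam i) * c i := Finset.sum_le_sum fun i _ => hterm i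
    _ = ∑ j, Real.sqrt (lam (σ j)) * c (σ j) := (Equiv.sum_comp σ _).symm
    _ = ∑ j, s j * (c ∘ σ) j := by
        refine Finset.sum_congr rfl fun j _ => ?_
        rw [hsval j]; rfl
    _ ≤ topsum s (Fintype.card ι) := by
        refine abel_bound s (c ∘ σ) hanti hs0 (fun j => hc0 _) (fun j => hc1 _) ?_
        calc ∑ j, (c ∘ σ) j = ∑ i, c i := Equiv.sum_comp σ c
          _ ≤ (Fintype.card ι : ℝ) := hsumc

lemma topsum_le_topsum {n : ℕ} (A B W₁ W₂ W₃ W₄ : Matrix (Fin n) (Fin n) ℂ)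
    (h₁ : W₁ * W₁ᴴ = 1) (h₂ : W₂ᴴ * W₂ = 1) (h₃ : W₃ * W₃ᴴ = 1) (h₄ : W₄ᴴ * W₄ = 1)
    (hB : B = (2⁻¹ : ℂ) • (W₁ * A * W₂ + W₃ * A * W₄))
    {sA sB : Fin n → ℝ} (hsA : IsSingListDesc A sA) (hsB : IsSingListDesc B sB)
    (k : ℕ) : topsum sB k ≤ topsum sA k := by
  classical
  obtain ⟨hanti, σ, hσ⟩ := hsB
  set h : (Bᴴ * B).IsHermitian := Matrix.isHermitian_conjTranspose_mul_self B with hh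
  set lam : Fin n → ℝ := h.eigenvalues with hlam
  set Y : Matrix (Fin n) (Fin n) ℂ := (Matrix.IsHermitian.eigenvectorUnitary h : Matrix (Fin n) (Fin n) ℂ) with hY
  have hYmem := (Matrix.IsHermitian.eigenvectorUnitary h).2
  have hY1 : Yᴴ * Y = 1 := by
    rw [← Matrix.star_eq_conjTranspose]
    exact (Matrix.mem_unitaryGroup_iff'.1 hYmem)
  have hlam0 : ∀ i, 0 ≤ lam i := fun i => Matrix.eigenvalues_conjTranspose_mul_self_nonneg B i
  have hs0 : ∀ i, 0 ≤ sB i := by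
    intro i; rw [hσ]; exact Real.sqrt_nonneg _
  have hsA0 : ∀ i, 0 ≤ sA i := by
    obtain ⟨-, τ, hτ⟩ := hsA
    intro i; rw [hτ]; exact Real.sqrt_nonneg _
  have hsval : ∀ j, sB j = Real.sqrt (lam (σ j)) := fun j => by rw [hσ]; rfl
  have hspec : Bᴴ * B * Y = Y * Matrix.diagonal (RCLike.ofReal ∘ lam) := by
    conv_lhs => rw [h.spectral_theorem, Unitary.conjStarAlgAut_apply]
    rw [Matrix.mul_assoc, Matrix.mul_assoc]
    rw [show (star (h.eigenvectorUnitary : Matrix (Fin n) (Fin n) ℂ)) * Y = 1 from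
      Matrix.mem_unitaryGroup_iff'.1 hYmem, Matrix.mul_one]
  set ycol : Fin n → Fin n → ℂ := fun i l => Y l i with hycol
  set mcol : Fin n → Fin n → ℂ := fun i l => (B * Y) l i with hmcol
  have hmcol' : ∀ i, mcol i = B *ᵥ ycol i := fun i => (mulVec_col B Y i).symm
  have coldot : ∀ i j, dotProduct (star (ycol i)) (ycol j) = if i = j then 1 else 0 := by
    intro i j
    have : dotProduct (star (ycol i)) (ycol j) = (Yᴴ * Y) i j := by
      simp [Matrix.mul_apply, dotProduct, Matrix.conjTranspose_apply, hycol]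
    rw [this, hY1, Matrix.one_apply]
  have keydot : ∀ i j, dotProduct (star (mcol i)) (mcol j)
      = if i = j then ((lam j : ℝ) : ℂ) else 0 := by
    intro i j
    rw [hmcol' i, hmcol' j, dot_adjoint, Matrix.mulVec_mulVec]
    rw [show (Bᴴ * B) *ᵥ ycol j = fun l => ((Bᴴ * B) * Y) l j from mulVec_col _ _ j, hspec]
    have e : (fun l => (Y * Matrix.diagonal (RCLike.ofReal ∘ lam) : Matrix (Fin n) (Fin n) ℂ) l j)
        = fun l => ((lam j : ℝ) : ℂ) * ycol j l := by
      funext l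
      simp [Matrix.mul_diagonal, hycol, mul_comm, RCLike.ofReal]
    rw [e]
    have e2 : dotProduct (star (ycol i)) (fun l => ((lam j : ℝ) : ℂ) * ycol j l)
        = ((lam j : ℝ) : ℂ) * dotProduct (star (ycol i)) (ycol j) := by
      simp [dotProduct, Finset.mul_sum]; ring_nf
      exact Finset.sum_congr rfl fun l _ => by ring
    rw [e2, coldot i j]
    by_cases hij : i = j <;> simp [hij]
  -- the subtype of "active" indices
  set ι : Type := {p : Fin n // (p : ℕ) < k ∧ sB p ≠ 0} with hι
  have hlampos : ∀ p : ι, 0 < lam (σ p.1) := by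
    intro p
    rcases p.2 with ⟨-, hne⟩
    have := hsval p.1
    rcases lt_or_eq_of_le (hlam0 (σ p.1)) with hlt | heq
    · exact hlt
    · exfalso; apply hne; rw [hsval p.1, ← heq, Real.sqrt_zero]
  have hsqval : ∀ p : ι, sB p.1 ^ 2 = lam (σ p.1) := by
    intro p
    rw [hsval p.1, Real.sq_sqrt (hlam0 _)]
  set V : Matrix (Fin n) ι ℂ := fun l p => Y l (σ p.1) with hV
  set U : Matrix (Fin n) ι ℂ := fun l p => ((sB p.1 : ℝ) : ℂ)⁻¹ * mcol (σ p.1) l with hU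
  have hVV : Vᴴ * V = 1 := by
    ext p q
    have : (Vᴴ * V) p q = dotProduct (star (ycol (σ p.1))) (ycol (σ q.1)) := by
      simp only [Matrix.mul_apply, Matrix.conjTranspose_apply]
      simp [Matrix.mul_apply, Matrix.conjTranspose_apply, dotProduct, hV, hycol]
    rw [this, coldot]
    by_cases hpq : p = q
    · subst hpq; simp
    · have hne : σ p.1 ≠ σ q.1 := by
        intro hcon
        exact hpq (Subtype.ext (σ.injective hcon))
      rw [if_neg hne, Matrix.one_apply_ne hpq]
  have hUU : Uᴴ * U = 1 := by
    ext p q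
    have hdot : (Uᴴ * U) p q = star (((sB p.1 : ℝ) : ℂ)⁻¹) *
        ((((sB q.1 : ℝ) : ℂ))⁻¹ * dotProduct (star (mcol (σ p.1))) (mcol (σ q.1))) := by
      simp only [Matrix.mul_apply, Matrix.conjTranspose_apply]
      simp only [Matrix.mul_apply, Matrix.conjTranspose_apply, hU, dotProduct,
        Pi.star_apply, star_mul', Finset.mul_sum]
      refine Finset.sum_congr rfl fun l _ => by ring
    rw [hdot, keydot]
    by_cases hpq : p = q
    · subst hpq
      have hne : σ p.1 = σ p.1 := rfl
      rw [if_pos rfl, Matrix.one_apply_eq]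
      have hstar : star (((sB p.1 : ℝ) : ℂ)⁻¹) = ((sB p.1 : ℝ) : ℂ)⁻¹ := by
        rw [← Complex.ofReal_inv, Complex.star_def, Complex.conj_ofReal]
      rw [hstar, ← Complex.ofReal_inv, ← Complex.ofReal_mul, ← Complex.ofReal_mul]
      have hne0 : sB p.1 ≠ 0 := p.2.2
      rw [show (sB p.1)⁻¹ * ((sB p.1)⁻¹ * lam (σ p.1)) = 1 by
        rw [← hsqval p, sq]
        field_simp]
      simp
    · have hne : σ p.1 ≠ σ q.1 := by
        intro hcon
        exact hpq (Subtype.ext (σ.injective hcon))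
      rw [if_neg hne, Matrix.one_apply_ne hpq]
      simp
  -- trace value
  have htrval : Matrix.trace (Uᴴ * B * V) = ((∑ p : ι, sB p.1 : ℝ) : ℂ) := by
    rw [Matrix.trace]
    rw [Complex.ofReal_sum]
    refine Finset.sum_congr rfl fun p _ => ?_
    have e0 : (Uᴴ * B * V).diag p = star (((sB p.1 : ℝ) : ℂ)⁻¹) *
        dotProduct (star (mcol (σ p.1))) (mcol (σ p.1)) := by
      rw [Matrix.diag_apply]
      rw [Matrix.mul_assoc]
      have eBV : ∀ l, (B * V : Matrix (Fin n) ι ℂ) l p = mcol (σ p.1) l := by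
        intro l
        simp only [Matrix.mul_apply]
        simp [Matrix.mul_apply, hV, hmcol]
      rw [Matrix.mul_apply]
      simp only [Matrix.conjTranspose_apply]
      simp only [Matrix.mul_apply, Matrix.conjTranspose_apply, hU, dotProduct,
        Pi.star_apply, star_mul', Finset.mul_sum, eBV]
      refine Finset.sum_congr rfl fun l _ => by ring
    rw [e0, keydot, if_pos rfl]
    have hstar : star (((sB p.1 : ℝ) : ℂ)⁻¹) = ((sB p.1 : ℝ) : ℂ)⁻¹ := by
      rw [← Complex.ofReal_inv, Complex.star_def, Complex.conj_ofReal]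
    rw [hstar, ← Complex.ofReal_inv, ← Complex.ofReal_mul]
    congr 1
    have hne0 : sB p.1 ≠ 0 := p.2.2
    rw [← hsqval p, sq]
    field_simp
  -- topsum sB k equals the trace
  have htop : topsum sB k = ∑ p : ι, sB p.1 := by
    rw [topsum]
    have e1 : ∑ i ∈ Finset.univ.filter (fun j : Fin n => (j : ℕ) < k), sB i
        = ∑ i ∈ Finset.univ.filter (fun j : Fin n => (j : ℕ) < k ∧ sB j ≠ 0), sB i := by
      rw [show (Finset.univ.filter (fun j : Fin n => (j : ℕ) < k ∧ sB j ≠ 0))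
          = (Finset.univ.filter (fun j : Fin n => (j : ℕ) < k)).filter (fun j => sB j ≠ 0) from by
        rw [Finset.filter_filter]]
      exact (Finset.sum_filter_of_ne (fun x _ hne => hne)).symm
    rw [e1]
    exact Finset.sum_subtype _ (fun x => by simp) _
  -- cardinality bound
  have hcard : (Fintype.card ι) ≤ k := by
    have e1 : Fintype.card ι
        = (Finset.univ.filter (fun j : Fin n => (j : ℕ) < k ∧ sB j ≠ 0)).card := by
      rw [Fintype.card_subtype]
    rw [e1]
    refine le_trans (Finset.card_le_card ?_) (card_filter_lt_le k)
    intro x hx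
    simp only [Finset.mem_filter] at hx ⊢
    exact ⟨hx.1, hx.2.1⟩
  -- assemble
  have hsplit : Uᴴ * B * V = (2⁻¹ : ℂ) • (Uᴴ * (W₁ * A * W₂) * V + Uᴴ * (W₃ * A * W₄) * V) := by
    rw [hB]
    rw [Matrix.mul_smul, Matrix.smul_mul, Matrix.mul_add, Matrix.add_mul]
  have hiso1 : (W₁ᴴ * U)ᴴ * (W₁ᴴ * U) = 1 := by
    rw [Matrix.conjTranspose_mul, Matrix.conjTranspose_conjTranspose]
    calc Uᴴ * W₁ * (W₁ᴴ * U) = Uᴴ * (W₁ * W₁ᴴ) * U := by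
          simp only [Matrix.mul_assoc]
      _ = 1 := by rw [h₁, Matrix.mul_one, hUU]
  have hiso3 : (W₃ᴴ * U)ᴴ * (W₃ᴴ * U) = 1 := by
    rw [Matrix.conjTranspose_mul, Matrix.conjTranspose_conjTranspose]
    calc Uᴴ * W₃ * (W₃ᴴ * U) = Uᴴ * (W₃ * W₃ᴴ) * U := by
          simp only [Matrix.mul_assoc]
      _ = 1 := by rw [h₃, Matrix.mul_one, hUU]
  have hiso2 : (W₂ * V)ᴴ * (W₂ * V) = 1 := by
    rw [Matrix.conjTranspose_mul]
    calc Vᴴ * W₂ᴴ * (W₂ * V) = Vᴴ * (W₂ᴴ * W₂) * V := by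
          simp only [Matrix.mul_assoc]
      _ = 1 := by rw [h₂, Matrix.mul_one, hVV]
  have hiso4 : (W₄ * V)ᴴ * (W₄ * V) = 1 := by
    rw [Matrix.conjTranspose_mul]
    calc Vᴴ * W₄ᴴ * (W₄ * V) = Vᴴ * (W₄ᴴ * W₄) * V := by
          simp only [Matrix.mul_assoc]
      _ = 1 := by rw [h₄, Matrix.mul_one, hVV]
  have ht1 : Uᴴ * (W₁ * A * W₂) * V = (W₁ᴴ * U)ᴴ * A * (W₂ * V) := by
    rw [Matrix.conjTranspose_mul, Matrix.conjTranspose_conjTranspose]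
    simp only [Matrix.mul_assoc]
  have ht3 : Uᴴ * (W₃ * A * W₄) * V = (W₃ᴴ * U)ᴴ * A * (W₄ * V) := by
    rw [Matrix.conjTranspose_mul, Matrix.conjTranspose_conjTranspose]
    simp only [Matrix.mul_assoc]
  have hb1 := kyfan_upper A hsA (W₁ᴴ * U) (W₂ * V) hiso1 hiso2
  have hb3 := kyfan_upper A hsA (W₃ᴴ * U) (W₄ * V) hiso3 hiso4
  have hre : (Matrix.trace (Uᴴ * B * V)).re
      ≤ 2⁻¹ * ((Matrix.trace ((W₁ᴴ * U)ᴴ * A * (W₂ * V))).re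
        + (Matrix.trace ((W₃ᴴ * U)ᴴ * A * (W₄ * V))).re) := by
    rw [hsplit, Matrix.trace_smul, Matrix.trace_add, ht1, ht3]
    rw [smul_eq_mul]
    rw [Complex.mul_re]
    simp [Complex.add_re]
  have hfin : (Matrix.trace (Uᴴ * B * V)).re ≤ topsum sA (Fintype.card ι) := by
    refine hre.trans ?_
    have := add_le_add hb1 hb3
    linarith
  have : topsum sB k ≤ topsum sA (Fintype.card ι) := by
    rw [htop, ← show ((∑ p : ι, sB p.1 : ℝ) : ℂ).re = ∑ p : ι, sB p.1 from Complex.ofReal_re _,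
      ← htrval]
    exact hfin
  exact this.trans (topsum_mono hsA0 hcard)

end Pinch
end


open Pinch in
/-- The pinching inequality: if `P` is an orthogonal projector, then
`S(PAP + (I−P)A(I−P)) ≺_w S(A)` and `S(PAP − (I−P)A(I−P)) ≺_w S(A)`. -/
theorem pinching_weakMaj {n : ℕ} (P A : Matrix (Fin n) (Fin n) ℂ)
    (hP : P.conjTranspose = P) (hPP : P * P = P)
    (sA sPlus sMinus : Fin n → ℝ)
    (hsA : IsSingListDesc A sA)
    (hsPlus : IsSingListDesc (P * A * P + (1 - P) * A * (1 - P)) sPlus)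
    (hsMinus : IsSingListDesc (P * A * P - (1 - P) * A * (1 - P)) sMinus) :
    WeakMajDesc sPlus sA ∧ WeakMajDesc sMinus sA := by
  classical
  set W : Matrix (Fin n) (Fin n) ℂ := P + P - 1 with hW
  have hWH : Wᴴ = W := by
    rw [hW]
    simp [Matrix.conjTranspose_sub, Matrix.conjTranspose_add, Matrix.conjTranspose_one, hP]
  have hWW : W * W = 1 := by
    have e : W * W = P * P + P * P + P * P + P * P - P - P - P - P + 1 := by
      rw [hW]; noncomm_ring
    rw [e, hPP]
    abel
  have hW1 : W * Wᴴ = 1 := by rw [hWH, hWW]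
  have hW2 : Wᴴ * W = 1 := by rw [hWH, hWW]
  have hOne1 : (1 : Matrix (Fin n) (Fin n) ℂ) * (1 : Matrix (Fin n) (Fin n) ℂ)ᴴ = 1 := by
    simp
  have hOne2 : (1 : Matrix (Fin n) (Fin n) ℂ)ᴴ * (1 : Matrix (Fin n) (Fin n) ℂ) = 1 := by
    simp
  have hBplus : P * A * P + (1 - P) * A * (1 - P)
      = (2⁻¹ : ℂ) • ((1 : Matrix (Fin n) (Fin n) ℂ) * A * 1 + W * A * W) := by
    have h2 : (2 : ℂ) • (P * A * P + (1 - P) * A * (1 - P))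
        = (1 : Matrix (Fin n) (Fin n) ℂ) * A * 1 + W * A * W := by
      rw [two_smul, hW]; noncomm_ring
    rw [← h2, smul_smul]
    norm_num
  have hBminus : P * A * P - (1 - P) * A * (1 - P)
      = (2⁻¹ : ℂ) • (W * A * 1 + (1 : Matrix (Fin n) (Fin n) ℂ) * A * W) := by
    have h2 : (2 : ℂ) • (P * A * P - (1 - P) * A * (1 - P))
        = W * A * 1 + (1 : Matrix (Fin n) (Fin n) ℂ) * A * W := by
      rw [two_smul, hW]; noncomm_ring
    rw [← h2, smul_smul]
    norm_num
  have keyPlus : ∀ k, topsum sPlus k ≤ topsum sA k := fun k =>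
    topsum_le_topsum A _ 1 1 W W hOne1 hOne2 hW1 hW2 hBplus hsA hsPlus k
  have keyMinus : ∀ k, topsum sMinus k ≤ topsum sA k := fun k =>
    topsum_le_topsum A _ W 1 1 W hW1 hOne2 hOne1 hW2 hBminus hsA hsMinus k
  constructor
  · intro t
    calc ∑ i ∈ t, sPlus i ≤ topsum sPlus t.card := sum_le_topsum sPlus hsPlus.1 t
      _ ≤ topsum sA t.card := keyPlus t.card
  · intro t
    calc ∑ i ∈ t, sMinus i ≤ topsum sMinus t.card := sum_le_topsum sMinus hsMinus.1 t
      _ ≤ topsum sA t.card := keyMinus t.card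
end
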